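/- arXiv:2303.05320 — 5 statements merged into one kernel-verified Lean document; each statement's English description precedes it below -/
import Mathlib

section
/- For each fixed real number L > 1 there exists a constant c > 0 such that for all j ∈ ℤ and all s ∈ ℝ one has Σ_{k∈ℤ} √(log(3 + |j| + |k|)) / (3 + |2^j s − k|)^L ≤ c · √(log(3 + |j| + 2^j |s|)). -/
open Real

/-- `√(a+b) ≤ √a + √b`. -/
lemma aux_sqrt_add_le {a b : ℝ} (ha : 0 ≤ a) (hb : 0 ≤ b) :
    Real.sqrt (a + b) ≤ Real.sqrt a + Real.sqrt b := by
  have h : a + b ≤ (Real.sqrt a + Real.sqrt b) ^ 2 := by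
    nlinarith [Real.sq_sqrt ha, Real.sq_sqrt hb, Real.sqrt_nonneg a, Real.sqrt_nonneg b,
      mul_nonneg (Real.sqrt_nonneg a) (Real.sqrt_nonneg b)]
  calc Real.sqrt (a + b) ≤ Real.sqrt ((Real.sqrt a + Real.sqrt b) ^ 2) := Real.sqrt_le_sqrt h
    _ = Real.sqrt a + Real.sqrt b := Real.sqrt_sq (by positivity)

/-- the basic summable series -/
lemma aux_summable (p : ℝ) (hp : 1 < p) :
    Summable (fun k : ℤ => 1 / (2 + |(k : ℝ)|) ^ p) := by
  have h0 : Summable (fun k : ℤ => 1 / |(k : ℝ) + 1/2| ^ p) :=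
    (Real.summable_one_div_int_add_rpow (1/2) p).mpr hp
  refine h0.of_nonneg_of_le (fun k => by positivity) (fun k => ?_)
  have h1 : (0:ℝ) < |(k : ℝ) + 1/2| := by
    rcases le_or_gt 0 k with h | h
    · have : (0:ℝ) ≤ (k:ℝ) := by exact_mod_cast h
      rw [abs_of_pos (by linarith)]; linarith
    · have hk1 : k ≤ -1 := by omega
      have : (k:ℝ) ≤ -1 := by exact_mod_cast hk1
      rw [abs_of_neg (by linarith)]; linarith
  have h2 : |(k : ℝ) + 1/2| ≤ 2 + |(k : ℝ)| := by
    calc |(k : ℝ) + 1/2| ≤ |(k:ℝ)| + |(1:ℝ)/2| := abs_add_le _ _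
      _ ≤ 2 + |(k:ℝ)| := by rw [abs_of_pos (by norm_num : (0:ℝ) < 1/2)]; linarith
  have := Real.rpow_le_rpow h1.le h2 (by linarith : (0:ℝ) ≤ p)
  gcongr

theorem tsum_sqrt_log_div_rpow_bound (L : ℝ) (hL : 1 < L) :
    ∃ c : ℝ, 0 < c ∧ ∀ (j : ℤ) (s : ℝ),
      Summable (fun k : ℤ =>
        Real.sqrt (Real.log (3 + |(j : ℝ)| + |(k : ℝ)|)) /
          (3 + |(2 : ℝ) ^ j * s - (k : ℝ)|) ^ L) ∧
      (∑' k : ℤ,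
        Real.sqrt (Real.log (3 + |(j : ℝ)| + |(k : ℝ)|)) /
          (3 + |(2 : ℝ) ^ j * s - (k : ℝ)|) ^ L)
        ≤ c * Real.sqrt (Real.log (3 + |(j : ℝ)| + (2 : ℝ) ^ j * |s|)) := by
  set p : ℝ := (L + 1) / 2 with hp_def
  have hp : 1 < p := by rw [hp_def]; linarith
  have hp0 : 0 < p := by linarith
  set C : ℝ := 1 / Real.sqrt (L - 1) with hC_def
  have hC : 0 < C := by
    rw [hC_def]; exact div_pos one_pos (Real.sqrt_pos.mpr (by linarith))
  set S : ℝ := ∑' k : ℤ, 1 / (2 + |(k : ℝ)|) ^ p with hS_def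
  have hsumS := aux_summable p hp
  have hS : 0 < S := Summable.tsum_pos hsumS (fun k => by positivity) 0 (by positivity)
  refine ⟨(1 + C) * S, by positivity, fun j s => ?_⟩
  set x : ℝ := (2:ℝ) ^ j * s with hx_def
  set A : ℝ := 3 + |(j : ℝ)| + |x| with hA_def
  have hA3 : (3:ℝ) ≤ A := by
    rw [hA_def]
    have := abs_nonneg ((j:ℝ)); have := abs_nonneg x; linarith
  have hA1 : (1:ℝ) ≤ Real.sqrt (Real.log A) := by
    have h3 : (1:ℝ) < Real.log 3 := by
      rw [show (1:ℝ) = Real.log (Real.exp 1) by rw [Real.log_exp]]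
      exact Real.log_lt_log (Real.exp_pos 1) (by
        have := Real.exp_one_lt_d9; linarith)
    have : (1:ℝ) ≤ Real.log A := le_of_lt (lt_of_lt_of_le h3
      (Real.log_le_log (by norm_num) hA3))
    calc (1:ℝ) = Real.sqrt 1 := (Real.sqrt_one).symm
      _ ≤ Real.sqrt (Real.log A) := Real.sqrt_le_sqrt this
  set m : ℤ := ⌊x⌋ with hm_def
  -- pointwise bound
  have key : ∀ k : ℤ,
      Real.sqrt (Real.log (3 + |(j : ℝ)| + |(k : ℝ)|)) / (3 + |x - (k : ℝ)|) ^ L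
        ≤ (Real.sqrt (Real.log A) + C) * (1 / (2 + |((k - m : ℤ) : ℝ)|) ^ p) := by
    intro k
    set B : ℝ := 3 + |x - (k : ℝ)| with hB_def
    have hB3 : (3:ℝ) ≤ B := by
      rw [hB_def]; have := abs_nonneg (x - (k:ℝ)); linarith
    have hB0 : (0:ℝ) < B := by linarith
    have hB1 : (1:ℝ) ≤ B := by linarith
    -- log bound
    have hlog : Real.log (3 + |(j : ℝ)| + |(k : ℝ)|) ≤ Real.log A + Real.log B := by
      rw [← Real.log_mul (by linarith) (by linarith)]
      apply Real.log_le_log (by positivity)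
      have hk : |(k:ℝ)| ≤ |x| + |x - (k:ℝ)| := by
        have := abs_sub_abs_le_abs_sub (k:ℝ) x
        have := abs_sub_comm (k:ℝ) x
        calc |(k:ℝ)| = |x + ((k:ℝ) - x)| := by ring_nf
          _ ≤ |x| + |(k:ℝ) - x| := abs_add_le _ _
          _ = |x| + |x - (k:ℝ)| := by rw [abs_sub_comm]
      have hAB : A + B ≤ A * B := by nlinarith
      rw [hA_def, hB_def] at *
      nlinarith [abs_nonneg ((j:ℝ))]
    have hlogA : (0:ℝ) ≤ Real.log A := Real.log_nonneg (by linarith)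
    have hlogB : (0:ℝ) ≤ Real.log B := Real.log_nonneg hB1
    have h1 : Real.sqrt (Real.log (3 + |(j : ℝ)| + |(k : ℝ)|))
        ≤ Real.sqrt (Real.log A) + Real.sqrt (Real.log B) :=
      (Real.sqrt_le_sqrt hlog).trans (aux_sqrt_add_le hlogA hlogB)
    -- √log B ≤ C * B^((L-1)/2)
    have h2 : Real.sqrt (Real.log B) ≤ C * B ^ ((L - 1)/2) := by
      have hle : Real.log B ≤ B ^ (L - 1) / (L - 1) :=
        Real.log_le_rpow_div hB0.le (by linarith)
      calc Real.sqrt (Real.log B) ≤ Real.sqrt (B ^ (L - 1) / (L - 1)) :=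
            Real.sqrt_le_sqrt hle
        _ = Real.sqrt (B ^ (L - 1)) / Real.sqrt (L - 1) :=
            Real.sqrt_div (by positivity) _
        _ = B ^ ((L - 1)/2) / Real.sqrt (L - 1) := by
            rw [Real.sqrt_eq_rpow, ← Real.rpow_mul hB0.le]
            congr 1
            ring
        _ = C * B ^ ((L - 1)/2) := by rw [hC_def]; ring
    -- combine numerator
    have hBL : (0:ℝ) < B ^ L := Real.rpow_pos_of_pos hB0 L
    have hBp : (0:ℝ) < B ^ p := Real.rpow_pos_of_pos hB0 p
    have h3 : Real.sqrt (Real.log (3 + |(j : ℝ)| + |(k : ℝ)|)) / B ^ L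
        ≤ Real.sqrt (Real.log A) / B ^ p + C / B ^ p := by
      have e1 : Real.sqrt (Real.log A) / B ^ L ≤ Real.sqrt (Real.log A) / B ^ p := by
        apply div_le_div_of_nonneg_left (Real.sqrt_nonneg _) hBp
        exact Real.rpow_le_rpow_of_exponent_le hB1 (by rw [hp_def]; linarith)
      have e2 : C * B ^ ((L - 1)/2) / B ^ L = C / B ^ p := by
        rw [mul_div_assoc, ← Real.rpow_sub hB0,
          show (L - 1)/2 - L = -p by rw [hp_def]; ring, Real.rpow_neg hB0.le]
        ring
      calc Real.sqrt (Real.log (3 + |(j : ℝ)| + |(k : ℝ)|)) / B ^ L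
          ≤ (Real.sqrt (Real.log A) + C * B ^ ((L - 1)/2)) / B ^ L := by
            have hnum : Real.sqrt (Real.log (3 + |(j : ℝ)| + |(k : ℝ)|))
                ≤ Real.sqrt (Real.log A) + C * B ^ ((L - 1)/2) := h1.trans (by linarith)
            gcongr
        _ = Real.sqrt (Real.log A) / B ^ L + C * B ^ ((L-1)/2) / B ^ L := by ring
        _ ≤ Real.sqrt (Real.log A) / B ^ p + C / B ^ p := by
            rw [e2]; linarith
    -- compare denominators
    have hden : (2 + |((k - m : ℤ) : ℝ)|) ^ p ≤ B ^ p := by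
      apply Real.rpow_le_rpow (by positivity) _ hp0.le
      have h5 : |((k - m : ℤ) : ℝ)| = |(k:ℝ) - (m:ℝ)| := by push_cast; ring_nf
      rw [h5, hB_def]
      have hfl : |x - (m:ℝ)| ≤ 1 := by
        rw [hm_def]
        have h6 := Int.floor_le x
        have h7 := Int.lt_floor_add_one x
        rw [abs_le]; constructor <;> [linarith; linarith]
      calc 2 + |(k:ℝ) - (m:ℝ)| ≤ 2 + (|(k:ℝ) - x| + |x - (m:ℝ)|) := by
            have := abs_sub_le ((k:ℝ)) x ((m:ℝ)); linarith
        _ ≤ 3 + |x - (k:ℝ)| := by rw [abs_sub_comm (k:ℝ) x]; linarith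
    have hden0 : (0:ℝ) < (2 + |((k - m : ℤ) : ℝ)|) ^ p := by positivity
    calc Real.sqrt (Real.log (3 + |(j : ℝ)| + |(k : ℝ)|)) / B ^ L
        ≤ Real.sqrt (Real.log A) / B ^ p + C / B ^ p := h3
      _ = (Real.sqrt (Real.log A) + C) / B ^ p := by ring
      _ ≤ (Real.sqrt (Real.log A) + C) / (2 + |((k - m : ℤ) : ℝ)|) ^ p := by
          apply div_le_div_of_nonneg_left (by positivity) hden0 hden
      _ = (Real.sqrt (Real.log A) + C) * (1 / (2 + |((k - m : ℤ) : ℝ)|) ^ p) := by ring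
  -- dominating function is summable
  have hsumg : Summable (fun k : ℤ => (Real.sqrt (Real.log A) + C) *
      (1 / (2 + |((k - m : ℤ) : ℝ)|) ^ p)) := by
    apply Summable.mul_left
    exact (Equiv.subRight m).summable_iff.mpr hsumS |>.congr (fun k => rfl)
  have hsumf : Summable (fun k : ℤ =>
      Real.sqrt (Real.log (3 + |(j : ℝ)| + |(k : ℝ)|)) / (3 + |x - (k : ℝ)|) ^ L) :=
    hsumg.of_nonneg_of_le (fun k => by positivity) key
  refine ⟨hsumf, ?_⟩
  have habs : (2:ℝ) ^ j * |s| = |x| := by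
    rw [hx_def, abs_mul, abs_of_pos (zpow_pos (by norm_num : (0:ℝ) < 2) j)]
  have htsum_g : (∑' k : ℤ, (Real.sqrt (Real.log A) + C) *
      (1 / (2 + |((k - m : ℤ) : ℝ)|) ^ p)) = (Real.sqrt (Real.log A) + C) * S := by
    rw [tsum_mul_left]
    congr 1
    rw [hS_def]
    exact (Equiv.subRight m).tsum_eq (fun k : ℤ => 1 / (2 + |(k : ℝ)|) ^ p)
  calc (∑' k : ℤ, Real.sqrt (Real.log (3 + |(j : ℝ)| + |(k : ℝ)|)) / (3 + |x - (k : ℝ)|) ^ L)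
      ≤ ∑' k : ℤ, (Real.sqrt (Real.log A) + C) * (1 / (2 + |((k - m : ℤ) : ℝ)|) ^ p) :=
        Summable.tsum_le_tsum key hsumf hsumg
    _ = (Real.sqrt (Real.log A) + C) * S := htsum_g
    _ ≤ ((1 + C) * Real.sqrt (Real.log A)) * S := by
        nlinarith [mul_nonneg (mul_nonneg hC.le (sub_nonneg.mpr hA1)) hS.le]
    _ = ((1 + C) * S) * Real.sqrt (Real.log A) := by ring
    _ = ((1 + C) * S) * Real.sqrt (Real.log (3 + |(j : ℝ)| + (2:ℝ) ^ j * |s|)) := by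
        rw [habs, ← hA_def]
end

section
/- Let δ ∈ (0,1/2). Then for every p ∈ ℤ one has γ_p^{(δ)} = (1/(2π)) ∫_0^{2π} e^{−i p ξ} (1 − e^{iξ})^{−δ} dξ, where for ξ ∈ (0,2π) the quantity (1 − e^{iξ})^{−δ} denotes the principal-branch complex power exp(−δ · Log(1 − e^{iξ})) (which coincides with the radial boundary limit lim_{r→1⁻} (1 − r e^{iξ})^{−δ}). In particular the Fourier coefficients of the L²([0,2π]) function ξ ↦ (1 − e^{iξ})^{−δ} with negative index vanish. -/
open scoped Real NNReal ENNReal Topology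
open Complex MeasureTheory Filter Set intervalIntegral Finset

/-- The FARIMA coefficients `γ_p^{(δ)}`:
`γ_0 = 1`, `γ_p = δ Γ(p+δ)/(Γ(p+1) Γ(δ+1))` for `p ≥ 1`, and `γ_p = 0` for `p < 0`. -/
noncomputable def gammaCoef (δ : ℝ) (p : ℤ) : ℝ :=
  if p = 0 then 1
  else if 0 < p then δ * Real.Gamma ((p : ℝ) + δ) / (Real.Gamma ((p : ℝ) + 1) * Real.Gamma (δ + 1))
  else 0

namespace Farima

/-- real binomial coefficients of `(1-z)^{-δ}` -/
noncomputable def c (δ : ℝ) (n : ℕ) : ℝ := ∏ j ∈ Finset.range n, ((δ + j) / (j + 1))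

lemma c_pos {δ : ℝ} (hδ : 0 < δ) (n : ℕ) : 0 < c δ n :=
  Finset.prod_pos fun j _ => by positivity

lemma c_le_one {δ : ℝ} (hδ0 : 0 < δ) (hδ1 : δ ≤ 1) (n : ℕ) : c δ n ≤ 1 :=
  Finset.prod_le_one (fun j _ => by positivity) (fun j _ => by
    rw [div_le_one (by positivity)]
    have : (0:ℝ) ≤ j := Nat.cast_nonneg j
    linarith)

lemma gamma_c {δ : ℝ} (hδ : 0 < δ) (n : ℕ) :
    Real.Gamma δ * n.factorial * c δ n = Real.Gamma (n + δ) := by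
  induction n with
  | zero => simp [c]
  | succ n ih =>
    have hne : (n:ℝ) + δ ≠ 0 := by positivity
    have h1 : Real.Gamma ((n:ℝ) + δ + 1) = ((n:ℝ) + δ) * Real.Gamma ((n:ℝ) + δ) :=
      Real.Gamma_add_one hne
    have h2 : ((n + 1 : ℕ) : ℝ) + δ = (n:ℝ) + δ + 1 := by push_cast; ring
    rw [h2, h1, ← ih, c, Finset.prod_range_succ, ← c]
    have hfac : ((n+1).factorial : ℝ) = (n+1) * n.factorial := by
      rw [Nat.factorial_succ]; push_cast; ring
    rw [hfac]
    field_simp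
    ring

lemma gammaCoef_eq_c {δ : ℝ} (hδ : 0 < δ) {p : ℤ} (hp : 0 ≤ p) :
    gammaCoef δ p = c δ p.toNat := by
  rcases eq_or_lt_of_le hp with h0 | h0
  · simp [gammaCoef, ← h0, c]
  · rw [gammaCoef, if_neg (by omega), if_pos h0]
    set n := p.toNat with hn
    have hpn : (p : ℝ) = (n : ℝ) := by rw [hn]; exact_mod_cast (Int.toNat_of_nonneg hp).symm
    rw [hpn]
    have hΓδ : Real.Gamma δ ≠ 0 := (Real.Gamma_pos_of_pos hδ).ne'
    have h1 : Real.Gamma ((n:ℝ) + 1) = n.factorial := Real.Gamma_nat_eq_factorial n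
    have h2 : Real.Gamma (δ + 1) = δ * Real.Gamma δ := Real.Gamma_add_one hδ.ne'
    rw [h1, h2, ← gamma_c hδ n]
    have hfac : (n.factorial : ℝ) ≠ 0 := by positivity
    field_simp

lemma c_cast (δ : ℝ) (n : ℕ) :
    (c δ n : ℂ) = (n.factorial : ℂ)⁻¹ * ∏ j ∈ Finset.range n, ((δ:ℂ) + j) := by
  have hden : ∏ j ∈ Finset.range n, ((j:ℂ) + 1) = (n.factorial : ℂ) := by
    rw [← Finset.prod_range_add_one_eq_factorial]
    push_cast
    rfl
  rw [c]
  push_cast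
  rw [Finset.prod_div_distrib, hden, div_eq_inv_mul]

lemma slit {z : ℂ} (hz : ‖z‖ < 1) : (1 - z) ∈ Complex.slitPlane := by
  rw [Complex.mem_slitPlane_iff]
  left
  simp only [Complex.sub_re, Complex.one_re]
  have h := Complex.re_le_norm z
  linarith

lemma hasDerivAt_cpow_one_sub (w : ℂ) {z : ℂ} (hz : ‖z‖ < 1) :
    HasDerivAt (fun z : ℂ => (1 - z) ^ w) (-(w * (1 - z) ^ (w - 1))) z := by
  have h1 : HasDerivAt (fun z : ℂ => 1 - z) (-1) z := (hasDerivAt_id z).const_sub 1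
  have := h1.cpow_const (c := w) (slit hz)
  simpa [mul_comm, mul_assoc, mul_neg] using this

lemma iteratedDeriv_f (δ : ℝ) (n : ℕ) : ∀ z : ℂ, ‖z‖ < 1 →
    iteratedDeriv n (fun z : ℂ => (1 - z) ^ (-(δ:ℂ))) z
      = (∏ j ∈ Finset.range n, ((δ:ℂ) + j)) * (1 - z) ^ (-(δ:ℂ) - n) := by
  induction n with
  | zero => intro z hz; simp
  | succ n ih =>
    intro z hz
    rw [iteratedDeriv_succ]
    have hev : iteratedDeriv n (fun z : ℂ => (1 - z) ^ (-(δ:ℂ)))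
        =ᶠ[nhds z] fun w => (∏ j ∈ Finset.range n, ((δ:ℂ) + j)) * (1 - w) ^ (-(δ:ℂ) - n) := by
      filter_upwards [Metric.isOpen_ball.mem_nhds (by simpa using hz : z ∈ Metric.ball (0:ℂ) 1)]
        with w hw
      exact ih w (by simpa using hw)
    rw [hev.deriv_eq]
    have hd := ((hasDerivAt_cpow_one_sub (-(δ:ℂ) - n) hz).const_mul
      (∏ j ∈ Finset.range n, ((δ:ℂ) + j))).deriv
    rw [hd, Finset.prod_range_succ]
    have hexp : -(δ:ℂ) - n - 1 = -(δ:ℂ) - (n + 1 : ℕ) := by push_cast; ring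
    rw [hexp]
    ring

lemma hasSum_binomial' (δ : ℝ) {z : ℂ} (hz : ‖z‖ < 1) :
    HasSum (fun n => ((∏ j ∈ Finset.range n, ((δ:ℝ) + j) / (j + 1) : ℝ) : ℂ) * z ^ n)
      ((1 - z) ^ (-(δ:ℂ))) := by
  set f : ℂ → ℂ := fun z => (1 - z) ^ (-(δ:ℂ)) with hf
  set ρ : ℝ≥0 := ⟨(1 + ‖z‖) / 2, by positivity⟩ with hρ
  have hρz : ‖z‖ < (ρ : ℝ) := by show ‖z‖ < (1 + ‖z‖) / 2; linarith
  have hρ1 : (ρ : ℝ) < 1 := by show (1 + ‖z‖) / 2 < 1; linarith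
  have hd : DifferentiableOn ℂ f (Metric.closedBall 0 ρ) := by
    intro w hw
    have hw1 : ‖w‖ < 1 := lt_of_le_of_lt (by simpa using hw) hρ1
    exact ((hasDerivAt_cpow_one_sub (-(δ:ℂ)) hw1).differentiableAt).differentiableWithinAt
  have hρpos : 0 < ρ := by
    have : (0:ℝ) < (ρ:ℝ) := lt_of_le_of_lt (norm_nonneg z) hρz
    exact_mod_cast this
  have hps := hd.hasFPowerSeriesOnBall hρpos
  have hmem : z ∈ Metric.eball (0:ℂ) ρ := by
    rw [Metric.mem_eball, edist_zero_right]
    exact_mod_cast hρz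
  have hsum := hps.hasSum_iteratedFDeriv hmem
  have hterm : ∀ n : ℕ, ((n.factorial : ℂ))⁻¹ • iteratedFDeriv ℂ n f 0 (fun _ => z)
      = ((∏ j ∈ Finset.range n, ((δ:ℝ) + j) / (j + 1) : ℝ) : ℂ) * z ^ n := by
    intro n
    rw [iteratedFDeriv_apply_eq_iteratedDeriv_mul_prod, iteratedDeriv_f δ n 0 (by simp)]
    have hcast : ((∏ j ∈ Finset.range n, ((δ:ℝ) + j) / (j + 1) : ℝ) : ℂ)
        = (n.factorial : ℂ)⁻¹ * ∏ j ∈ Finset.range n, ((δ:ℂ) + j) := by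
      have hden : ∏ j ∈ Finset.range n, ((j:ℂ) + 1) = (n.factorial : ℂ) := by
        rw [← Finset.prod_range_add_one_eq_factorial]; push_cast; rfl
      push_cast
      rw [Finset.prod_div_distrib, hden, div_eq_inv_mul]
    rw [hcast]
    simp only [Finset.prod_const, Finset.card_univ, Fintype.card_fin, sub_zero, Complex.one_cpow,
      mul_one, smul_eq_mul]
    ring
  rw [show (fun n => ((n.factorial : ℂ))⁻¹ • iteratedFDeriv ℂ n f 0 (fun _ => z))
      = fun n => ((∏ j ∈ Finset.range n, ((δ:ℝ) + j) / (j + 1) : ℝ) : ℂ) * z ^ n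
    from funext hterm] at hsum
  simpa [hf] using hsum

lemma hasSum_binomial (δ : ℝ) {z : ℂ} (hz : ‖z‖ < 1) :
    HasSum (fun n => ((c δ n : ℝ) : ℂ) * z ^ n) ((1 - z) ^ (-(δ:ℂ))) := by
  have := hasSum_binomial' δ hz
  simpa [c] using this

lemma norm_exp_I_mul_int (m : ℤ) (ξ : ℝ) : ‖Complex.exp (Complex.I * m * ξ)‖ = 1 := by
  rw [Complex.norm_exp]
  have : (Complex.I * m * ξ).re = 0 := by
    simp [Complex.mul_re, Complex.mul_im]
  rw [this, Real.exp_zero]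

lemma norm_exp_neg_I_mul (p : ℤ) (ξ : ℝ) : ‖Complex.exp (-Complex.I * p * ξ)‖ = 1 := by
  rw [Complex.norm_exp]
  have : (-Complex.I * p * ξ).re = 0 := by
    simp [Complex.mul_re, Complex.mul_im]
  rw [this, Real.exp_zero]

lemma integral_exp_int (m : ℤ) :
    (∫ ξ in (0:ℝ)..(2*π), Complex.exp (Complex.I * m * ξ))
      = if m = 0 then ((2*π:ℝ):ℂ) else 0 := by
  rcases eq_or_ne m 0 with h | h
  · simp [h]
  · rw [if_neg h]
    have hc : (Complex.I * m) ≠ 0 :=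
      mul_ne_zero Complex.I_ne_zero (by exact_mod_cast h)
    have key := integral_exp_mul_complex (a := 0) (b := 2*π) hc
    have h1 : Complex.exp (Complex.I * m * ((2*π:ℝ):ℂ)) = 1 := by
      have := Complex.exp_int_mul_two_pi_mul_I m
      rw [← this]
      congr 1
      push_cast
      ring
    have h2 : Complex.exp (Complex.I * m * ((0:ℝ):ℂ)) = 1 := by
      norm_num
    simp only [mul_assoc] at key h1 h2 ⊢
    rw [key, h1, h2, sub_self, zero_div]

lemma sq_abs_one_sub_mul (r ξ : ℝ) :
    ‖1 - (r:ℂ) * Complex.exp (Complex.I * ξ)‖ ^ 2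
      = 1 - 2*r*Real.cos ξ + r^2 := by
  rw [Complex.sq_norm, Complex.normSq_apply]
  simp only [Complex.sub_re, Complex.sub_im, Complex.one_re, Complex.one_im, Complex.mul_re,
    Complex.mul_im, Complex.ofReal_re, Complex.ofReal_im, Complex.exp_re, Complex.exp_im,
    Complex.I_re, Complex.I_im, zero_mul, one_mul, zero_sub, sub_zero, zero_add, mul_zero,
    Real.exp_zero]
  nlinarith [Real.sin_sq_add_cos_sq ξ]

lemma sq_abs_one_sub (ξ : ℝ) :
    ‖1 - Complex.exp (Complex.I * ξ)‖ ^ 2 = 2 - 2*Real.cos ξ := by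
  have := sq_abs_one_sub_mul 1 ξ
  simp only [Complex.ofReal_one, one_mul] at this
  rw [this]; ring

lemma re_one_sub_mul (r ξ : ℝ) :
    (1 - (r:ℂ) * Complex.exp (Complex.I * ξ)).re = 1 - r * Real.cos ξ := by
  simp only [Complex.sub_re, Complex.one_re, Complex.mul_re, Complex.ofReal_re,
    Complex.ofReal_im, Complex.exp_re, Complex.exp_im, Complex.mul_im, Complex.I_re,
    Complex.I_im, zero_mul, one_mul, zero_sub, sub_zero, zero_add, mul_zero, Real.exp_zero]

lemma norm_cpow_neg_delta {δ : ℝ} {z : ℂ} (hz : 0 < z.re) :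
    ‖z ^ (-(δ:ℂ))‖ = ‖z‖ ^ (-δ) := by
  have hz0 : z ≠ 0 := by
    intro h; rw [h] at hz; simp at hz
  rw [Complex.norm_cpow_of_ne_zero hz0]
  simp

lemma cos_lt_one_of_Ioo {ξ : ℝ} (hξ : ξ ∈ Set.Ioo (0:ℝ) (2*π)) : Real.cos ξ < 1 := by
  refine lt_of_le_of_ne (Real.cos_le_one ξ) ?_
  intro h
  obtain ⟨n, hn⟩ := (Real.cos_eq_one_iff ξ).1 h
  have hπ : (0:ℝ) < π := Real.pi_pos
  have h1 : (0:ℝ) < n := by nlinarith [hξ.1]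
  have h2 : (n:ℝ) < 1 := by nlinarith [hξ.2]
  have h1' : (0:ℤ) < n := by exact_mod_cast h1
  have h2' : (n:ℤ) < 1 := by exact_mod_cast h2
  omega

lemma one_side_bound {δ x B : ℝ} (hδ0 : 0 < δ) (hx : 0 < x) (hxπ : x ≤ π)
    (hB : 0 ≤ B) (hB2 : B^2 = 2 - 2*Real.cos x) :
    B ^ (-δ) ≤ π^δ * x^(-δ) := by
  have hπ : (0:ℝ) < π := Real.pi_pos
  have hcos : Real.cos x ≤ 1 - 2/π^2 * x^2 :=
    Real.cos_le_one_sub_mul_cos_sq (by rw [abs_of_pos hx]; exact hxπ)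
  have hxπ' : (0:ℝ) < x/π := by positivity
  have h0 : 2/π^2 * x^2 * π^2 = 2 * x^2 := by field_simp
  have key : 2 * x^2 ≤ (1 - Real.cos x) * π^2 := by
    nlinarith [mul_le_mul_of_nonneg_right hcos (sq_nonneg π)]
  have hsq : (x/π)^2 ≤ B^2 := by
    rw [div_pow, hB2, div_le_iff₀ (by positivity)]
    nlinarith [sq_nonneg x]
  have hle : x/π ≤ B := by
    rw [← Real.sqrt_sq hxπ'.le, ← Real.sqrt_sq hB]
    exact Real.sqrt_le_sqrt hsq
  have h1 : B ^ (-δ) ≤ (x/π) ^ (-δ) :=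
    Real.rpow_le_rpow_of_nonpos hxπ' hle (by linarith)
  calc B ^ (-δ) ≤ (x/π) ^ (-δ) := h1
    _ = x^(-δ) / π^(-δ) := Real.div_rpow hx.le hπ.le _
    _ = π^δ * x^(-δ) := by
        rw [Real.rpow_neg hπ.le δ, div_eq_mul_inv, inv_inv, mul_comm]

lemma abs_one_sub_rpow_bound {δ : ℝ} (hδ0 : 0 < δ) {ξ : ℝ} (hξ : ξ ∈ Set.Ioo (0:ℝ) (2*π)) :
    ‖1 - Complex.exp (Complex.I * ξ)‖ ^ (-δ)
      ≤ π^δ * (ξ^(-δ) + (2*π - ξ)^(-δ)) := by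
  have hπ : (0:ℝ) < π := Real.pi_pos
  set B := ‖1 - Complex.exp (Complex.I * ξ)‖ with hB
  have hB0 : 0 ≤ B := norm_nonneg _
  have hB2 : B^2 = 2 - 2*Real.cos ξ := sq_abs_one_sub ξ
  rcases le_or_gt ξ π with h | h
  · have := one_side_bound hδ0 hξ.1 h hB0 hB2
    have h2 : 0 ≤ π^δ * (2*π - ξ)^(-δ) :=
      mul_nonneg (Real.rpow_nonneg hπ.le δ) (Real.rpow_nonneg (by linarith [hξ.2]) _)
    nlinarith
  · have hcos : Real.cos ξ = Real.cos (2*π - ξ) := by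
      rw [Real.cos_two_pi_sub]
    have := one_side_bound hδ0 (by linarith [hξ.2] : (0:ℝ) < 2*π - ξ) (by linarith)
      hB0 (by rw [hB2, hcos])
    have h2 : 0 ≤ π^δ * ξ^(-δ) :=
      mul_nonneg (Real.rpow_nonneg hπ.le δ) (Real.rpow_nonneg hξ.1.le _)
    nlinarith

lemma abs_ge_of_half {r ξ : ℝ} (hr : 1/2 ≤ r) (hr1 : r ≤ 1) :
    ‖1 - Complex.exp (Complex.I * ξ)‖ / Real.sqrt 2
      ≤ ‖1 - (r:ℂ) * Complex.exp (Complex.I * ξ)‖ := by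
  set A := ‖1 - (r:ℂ) * Complex.exp (Complex.I * ξ)‖ with hA
  set B := ‖1 - Complex.exp (Complex.I * ξ)‖ with hBd
  have hA0 : 0 ≤ A := norm_nonneg _
  have hB0 : 0 ≤ B := norm_nonneg _
  have hA2 : A^2 = 1 - 2*r*Real.cos ξ + r^2 := sq_abs_one_sub_mul r ξ
  have hB2 : B^2 = 2 - 2*Real.cos ξ := sq_abs_one_sub ξ
  have hcos1 : Real.cos ξ ≤ 1 := Real.cos_le_one ξ
  have hsq : (B / Real.sqrt 2)^2 ≤ A^2 := by
    rw [div_pow, Real.sq_sqrt (by norm_num : (0:ℝ) ≤ 2), hA2, hB2]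
    nlinarith [sq_nonneg (r - 1)]
  have h0 : 0 ≤ B / Real.sqrt 2 := by positivity
  rw [← Real.sqrt_sq h0, ← Real.sqrt_sq hA0]
  exact Real.sqrt_le_sqrt hsq

lemma norm_exp_I_mul_real (ξ : ℝ) : ‖Complex.exp (Complex.I * ξ)‖ = 1 := by
  have := norm_exp_I_mul_int 1 ξ
  simpa using this

lemma integral_r {δ : ℝ} (hδ0 : 0 < δ) (hδ1 : δ < 1) (p : ℤ) {r : ℝ} (hr0 : 0 ≤ r) (hr1 : r < 1) :
    (∫ ξ in Set.Ioc (0:ℝ) (2*π),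
        Complex.exp (-Complex.I * p * ξ) * (1 - (r:ℂ) * Complex.exp (Complex.I * ξ)) ^ (-(δ:ℂ)))
      = ((2 * π * gammaCoef δ p * r ^ p.toNat : ℝ) : ℂ) := by
  have h2π : (0:ℝ) < 2*π := by positivity
  set F : ℕ → ℝ → ℂ := fun k ξ =>
    (c δ k : ℂ) * (r:ℂ)^k * Complex.exp (Complex.I * (((k:ℤ) - p : ℤ):ℂ) * ξ) with hF
  have hzlt : ∀ ξ : ℝ, ‖(r:ℂ) * Complex.exp (Complex.I * ξ)‖ < 1 := by
    intro ξ
    rw [norm_mul, norm_exp_I_mul_real, mul_one, Complex.norm_real, Real.norm_eq_abs,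
      _root_.abs_of_nonneg hr0]
    exact hr1
  have hfun : ∀ ξ : ℝ,
      Complex.exp (-Complex.I * p * ξ) * (1 - (r:ℂ) * Complex.exp (Complex.I * ξ)) ^ (-(δ:ℂ))
        = ∑' k, F k ξ := by
    intro ξ
    rw [← (hasSum_binomial δ (hzlt ξ)).tsum_eq, ← tsum_mul_left]
    congr 1
    funext k
    have harg : Complex.I * (((k:ℤ) - p : ℤ):ℂ) * ξ
        = (k:ℕ) * (Complex.I * ξ) + -Complex.I * p * ξ := by push_cast; ring
    simp only [hF]
    rw [harg, Complex.exp_add, Complex.exp_nat_mul]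
    ring
  simp_rw [hfun]
  have hmeas : ∀ k : ℕ, AEStronglyMeasurable (F k) (volume.restrict (Set.Ioc (0:ℝ) (2*π))) := by
    intro k
    apply Continuous.aestronglyMeasurable
    simp only [hF]
    fun_prop
  have hFnorm : ∀ k ξ, ‖F k ξ‖₊ = ‖c δ k * r ^ k‖₊ := by
    intro k ξ
    have h : ‖F k ξ‖ = ‖c δ k * r ^ k‖ := by
      simp only [hF]
      rw [norm_mul, norm_exp_I_mul_int, mul_one, ← Complex.ofReal_pow, ← Complex.ofReal_mul,
        Complex.norm_real]
    exact NNReal.coe_injective (by simpa using h)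
  have hsum2 : Summable (fun k : ℕ => ‖c δ k * r ^ k‖₊) := by
    rw [← NNReal.summable_coe]
    simp only [coe_nnnorm]
    apply Summable.of_nonneg_of_le (fun k => norm_nonneg _) (fun k => ?_)
      (summable_geometric_of_lt_one hr0 hr1)
    rw [Real.norm_eq_abs, _root_.abs_of_nonneg (mul_nonneg (c_pos hδ0 k).le (pow_nonneg hr0 k))]
    exact mul_le_of_le_one_left (pow_nonneg hr0 k) (c_le_one hδ0 hδ1.le k)
  have hlint : ∑' k, ∫⁻ ξ in Set.Ioc (0:ℝ) (2*π), ‖F k ξ‖₊ ∂volume ≠ ⊤ := by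
    have heq : ∀ k : ℕ, (∫⁻ ξ in Set.Ioc (0:ℝ) (2*π), ‖F k ξ‖₊ ∂volume)
        = (‖c δ k * r ^ k‖₊ : ℝ≥0∞) * volume (Set.Ioc (0:ℝ) (2*π)) := by
      intro k
      simp_rw [hFnorm k]
      exact setLIntegral_const _ _
    simp_rw [heq]
    rw [ENNReal.tsum_mul_right]
    exact ENNReal.mul_ne_top (ENNReal.tsum_coe_ne_top_iff_summable.mpr hsum2)
      measure_Ioc_lt_top.ne
  rw [MeasureTheory.integral_tsum hmeas hlint]
  have hint : ∀ k : ℕ, (∫ ξ in Set.Ioc (0:ℝ) (2*π), F k ξ)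
      = (c δ k : ℂ) * (r:ℂ)^k * (if ((k:ℤ) - p) = 0 then ((2*π:ℝ):ℂ) else 0) := by
    intro k
    simp only [hF]
    rw [MeasureTheory.integral_const_mul, ← intervalIntegral.integral_of_le h2π.le,
      integral_exp_int]
  simp_rw [hint]
  rcases lt_or_ge p 0 with hp | hp
  · have hz : ∀ k : ℕ, (if ((k:ℤ) - p) = 0 then ((2*π:ℝ):ℂ) else 0) = 0 :=
      fun k => if_neg (by omega)
    simp_rw [hz, mul_zero, tsum_zero]
    have hg : gammaCoef δ p = 0 := by
      rw [gammaCoef, if_neg (by omega), if_neg (by omega)]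
    rw [hg]
    norm_num
  · rw [tsum_eq_single p.toNat ?_]
    · rw [if_pos (by omega), gammaCoef_eq_c hδ0 hp]
      push_cast
      ring
    · intro k hk
      rw [if_neg (by omega), mul_zero]


end Farima
theorem gammaCoef_eq_fourierCoeff (δ : ℝ) (hδ : δ ∈ Set.Ioo (0 : ℝ) (1 / 2)) :
    ∀ p : ℤ,
      ((gammaCoef δ p : ℝ) : ℂ) =
        ((1 / (2 * Real.pi) : ℝ) : ℂ) *
          ∫ ξ in (0 : ℝ)..(2 * Real.pi),
            Complex.exp (-Complex.I * (p : ℂ) * (ξ : ℂ)) *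
              (1 - Complex.exp (Complex.I * (ξ : ℂ))) ^ (-(δ : ℂ)) := by
  obtain ⟨hδ0, hδhalf⟩ := hδ
  have hδ1 : δ < 1 := by linarith
  intro p
  have hπ : (0:ℝ) < π := Real.pi_pos
  have h2π : (0:ℝ) < 2*π := by positivity
  set l : Filter ℝ := nhdsWithin 1 (Set.Iio 1) with hl
  set G : ℝ → ℝ → ℂ := fun r ξ =>
    Complex.exp (-Complex.I * p * ξ) * (1 - (r:ℂ) * Complex.exp (Complex.I * ξ)) ^ (-(δ:ℂ))
    with hG
  set bound : ℝ → ℝ := fun ξ => Real.sqrt 2 ^ δ * (π^δ * (ξ^(-δ) + (2*π - ξ)^(-δ))) with hbound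
  have haeIoo : ∀ᵐ ξ ∂(volume.restrict (Set.Ioc (0:ℝ) (2*π))), ξ ∈ Set.Ioo (0:ℝ) (2*π) := by
    have h1 : ∀ᵐ ξ ∂(volume.restrict (Set.Ioc (0:ℝ) (2*π))), ξ ∈ Set.Ioc (0:ℝ) (2*π) :=
      ae_restrict_mem measurableSet_Ioc
    have h2 : ∀ᵐ ξ : ℝ ∂(volume : Measure ℝ), ξ ≠ 2*π := by
      refine ae_iff.2 ?_
      simp only [not_not, Set.setOf_eq_eq_singleton]
      exact measure_singleton _
    have h2' := ae_restrict_of_ae (s := Set.Ioc (0:ℝ) (2*π)) h2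
    filter_upwards [h1, h2'] with ξ hξ hne
    exact ⟨hξ.1, lt_of_le_of_ne hξ.2 hne⟩
  have hmeas : ∀ᶠ r in l, AEStronglyMeasurable (G r)
      (volume.restrict (Set.Ioc (0:ℝ) (2*π))) := by
    filter_upwards [Ioo_mem_nhdsLT_of_mem
      (show (1:ℝ) ∈ Set.Ioc (1/2:ℝ) 1 from ⟨by norm_num, le_refl 1⟩)] with r hr
    apply Continuous.aestronglyMeasurable
    simp only [hG]
    apply Continuous.mul
    · fun_prop
    · apply Continuous.cpow
      · fun_prop
      · exact continuous_const
      · intro ξ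
        rw [Complex.mem_slitPlane_iff]
        left
        rw [Farima.re_one_sub_mul]
        nlinarith [Real.cos_le_one ξ, Real.neg_one_le_cos ξ, hr.1, hr.2]
  have hb : ∀ᶠ r in l, ∀ᵐ ξ ∂(volume.restrict (Set.Ioc (0:ℝ) (2*π))), ‖G r ξ‖ ≤ bound ξ := by
    filter_upwards [Ioo_mem_nhdsLT_of_mem
      (show (1:ℝ) ∈ Set.Ioc (1/2:ℝ) 1 from ⟨by norm_num, le_refl 1⟩)] with r hr
    filter_upwards [haeIoo] with ξ hξ
    have hre : 0 < (1 - (r:ℂ) * Complex.exp (Complex.I * ξ)).re := by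
      rw [Farima.re_one_sub_mul]
      nlinarith [Real.cos_le_one ξ, Real.neg_one_le_cos ξ, hr.1, hr.2]
    simp only [hG]
    rw [norm_mul, Farima.norm_exp_neg_I_mul, one_mul, Farima.norm_cpow_neg_delta hre]
    have hBpos : 0 < ‖1 - Complex.exp (Complex.I * ξ)‖ := by
      have h2 := Farima.sq_abs_one_sub ξ
      have hc := Farima.cos_lt_one_of_Ioo hξ
      nlinarith [norm_nonneg (1 - Complex.exp (Complex.I * (ξ:ℂ)))]
    have hquot : 0 < ‖1 - Complex.exp (Complex.I * ξ)‖ / Real.sqrt 2 := by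
      positivity
    have h1 : ‖1 - (r:ℂ) * Complex.exp (Complex.I * ξ)‖ ^ (-δ)
        ≤ (‖1 - Complex.exp (Complex.I * ξ)‖ / Real.sqrt 2) ^ (-δ) :=
      Real.rpow_le_rpow_of_nonpos hquot (Farima.abs_ge_of_half hr.1.le hr.2.le) (by linarith)
    have h2 : (‖1 - Complex.exp (Complex.I * ξ)‖ / Real.sqrt 2) ^ (-δ)
        = Real.sqrt 2 ^ δ * ‖1 - Complex.exp (Complex.I * ξ)‖ ^ (-δ) := by
      rw [Real.div_rpow (norm_nonneg _) (Real.sqrt_nonneg 2) _,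
        Real.rpow_neg (Real.sqrt_nonneg 2) δ, div_eq_mul_inv, inv_inv, mul_comm]
    have h3 := Farima.abs_one_sub_rpow_bound hδ0 hξ
    have hs2 : 0 ≤ Real.sqrt 2 ^ δ := Real.rpow_nonneg (Real.sqrt_nonneg 2) δ
    calc ‖1 - (r:ℂ) * Complex.exp (Complex.I * ξ)‖ ^ (-δ)
        ≤ (‖1 - Complex.exp (Complex.I * ξ)‖ / Real.sqrt 2) ^ (-δ) := h1
      _ = Real.sqrt 2 ^ δ * ‖1 - Complex.exp (Complex.I * ξ)‖ ^ (-δ) := h2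
      _ ≤ Real.sqrt 2 ^ δ * (π^δ * (ξ^(-δ) + (2*π - ξ)^(-δ))) :=
          mul_le_mul_of_nonneg_left h3 hs2
  have hbi : Integrable bound (volume.restrict (Set.Ioc (0:ℝ) (2*π))) := by
    have i1 : IntervalIntegrable (fun ξ:ℝ => ξ^(-δ)) volume 0 (2*π) :=
      intervalIntegrable_rpow' (by linarith)
    have i2 : IntervalIntegrable (fun ξ:ℝ => (2*π - ξ)^(-δ)) volume 0 (2*π) := by
      have := (i1.comp_sub_left (2*π)).symm
      simpa using this
    have hbeq : bound = fun ξ => (Real.sqrt 2 ^ δ * π^δ) * (ξ^(-δ) + (2*π-ξ)^(-δ)) := by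
      funext ξ; rw [hbound]; ring
    rw [hbeq]
    exact (intervalIntegrable_iff_integrableOn_Ioc_of_le h2π.le).mp
      ((i1.add i2).const_mul (Real.sqrt 2 ^ δ * π^δ))
  have hlim : ∀ᵐ ξ ∂(volume.restrict (Set.Ioc (0:ℝ) (2*π))),
      Tendsto (fun r => G r ξ) l (𝓝 (G 1 ξ)) := by
    filter_upwards [haeIoo] with ξ hξ
    simp only [hG]
    apply Tendsto.const_mul
    have hbase : Tendsto (fun r : ℝ => 1 - (r:ℂ) * Complex.exp (Complex.I * ξ)) l
        (𝓝 (1 - ((1:ℝ):ℂ) * Complex.exp (Complex.I * ξ))) := by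
      apply Tendsto.mono_left _ nhdsWithin_le_nhds
      exact Continuous.tendsto (by fun_prop) 1
    have hcont : ContinuousAt (fun z : ℂ => z ^ (-(δ:ℂ)))
        (1 - ((1:ℝ):ℂ) * Complex.exp (Complex.I * ξ)) := by
      apply continuousAt_cpow_const
      rw [Complex.mem_slitPlane_iff]
      left
      rw [Farima.re_one_sub_mul]
      nlinarith [Farima.cos_lt_one_of_Ioo hξ]
    exact hcont.tendsto.comp hbase
  have hDCT := MeasureTheory.tendsto_integral_filter_of_dominated_convergence
    bound hmeas hb hbi hlim
  have hev : (fun r => ∫ ξ in Set.Ioc (0:ℝ) (2*π), G r ξ)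
      =ᶠ[l] fun r => ((2 * π * gammaCoef δ p * r ^ p.toNat : ℝ) : ℂ) := by
    filter_upwards [Ioo_mem_nhdsLT_of_mem
      (show (1:ℝ) ∈ Set.Ioc (0:ℝ) 1 from ⟨by norm_num, le_refl 1⟩)] with r hr
    exact Farima.integral_r hδ0 hδ1 p hr.1.le hr.2
  have htend2 : Tendsto (fun r : ℝ => ((2 * π * gammaCoef δ p * r ^ p.toNat : ℝ) : ℂ)) l
      (𝓝 ((2 * π * gammaCoef δ p * (1:ℝ) ^ p.toNat : ℝ) : ℂ)) := by
    apply Tendsto.mono_left _ nhdsWithin_le_nhds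
    exact Continuous.tendsto (by fun_prop) 1
  have htend2' : Tendsto (fun r => ∫ ξ in Set.Ioc (0:ℝ) (2*π), G r ξ) l
      (𝓝 ((2 * π * gammaCoef δ p : ℝ) : ℂ)) := by
    rw [tendsto_congr' hev]
    simpa using htend2
  have heq : (∫ ξ in Set.Ioc (0:ℝ) (2*π), G 1 ξ) = ((2 * π * gammaCoef δ p : ℝ) : ℂ) :=
    tendsto_nhds_unique hDCT htend2'
  rw [intervalIntegral.integral_of_le h2π.le]
  have hGeq : (∫ ξ in Set.Ioc (0:ℝ) (2*π),
      Complex.exp (-Complex.I * p * ξ) * (1 - Complex.exp (Complex.I * ξ)) ^ (-(δ:ℂ)))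
        = ((2 * π * gammaCoef δ p : ℝ) : ℂ) := by
    rw [← heq]
    congr 1
    funext ξ
    simp [hG]
  rw [hGeq]
  push_cast
  have hπne : (π:ℂ) ≠ 0 := by exact_mod_cast hπ.ne'
  field_simp
end

section
/- Let f : ℝ → ℝ be a Schwartz function and let (a_p)_{p∈ℤ} be a sequence of real numbers which is slowly increasing, i.e. there exist constants κ > 0 and μ > 0 with |a_p| ≤ κ(1+|p|)^μ for all p ∈ ℤ. Define A_0 := 0, A_q := Σ_{p=1}^{q} a_p for q > 0, A_q := −Σ_{p=q+1}^{0} a_p for q < 0, and f̃(y) := ∫_{y−1}^{y} f(v) dv for y ∈ ℝ. Then: (i) f̃ is a Schwartz function; (ii) the sequence (A_q)_{q∈ℤ} is slowly increasing, i.e. there exist κ' > 0, μ' > 0 with |A_q| ≤ κ'(1+|q|)^{μ'} for all q; and (iii) for every t ∈ ℝ the two series below converge absolutely and Σ_{k∈ℤ} a_k ∫_0^t f(v−k) dv = Σ_{q∈ℤ} A_q ( f̃(t−q) − f̃(−q) ). -/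
open MeasureTheory
open scoped ContDiff

/-- `f̃(y) = ∫_{y-1}^y f(v) dv`. -/
noncomputable def ftilde (f : ℝ → ℝ) (y : ℝ) : ℝ := ∫ v in (y - 1)..y, f v

namespace AbelAuxNS

lemma one_add_abs_le (a b : ℝ) : 1 + |a| ≤ (1 + |b|) * (1 + |a - b|) := by
  have e : b + (a - b) = a := by ring
  have h := abs_add_le b (a - b)
  rw [e] at h
  nlinarith [abs_nonneg b, abs_nonneg (a - b)]

lemma rpow_helper {x y c r : ℝ} (hr : 0 ≤ r) (hx : 1 ≤ x) (hy : 1 ≤ y) (hc : 1 ≤ c)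
    (h : y ≤ x * c) : x ^ (-r) ≤ c ^ r * y ^ (-r) := by
  have hx0 : (0:ℝ) < x := lt_of_lt_of_le one_pos hx
  have hy0 : (0:ℝ) < y := lt_of_lt_of_le one_pos hy
  have hc0 : (0:ℝ) < c := lt_of_lt_of_le one_pos hc
  have hyr : y ^ r ≤ x ^ r * c ^ r := by
    rw [← Real.mul_rpow hx0.le hc0.le]
    exact Real.rpow_le_rpow hy0.le h hr
  rw [Real.rpow_neg hx0.le, Real.rpow_neg hy0.le, inv_eq_one_div, inv_eq_one_div, mul_one_div,
    div_le_div_iff₀ (by positivity) (by positivity)]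
  nlinarith

lemma decay_one_add (f : SchwartzMap ℝ ℝ) (k n : ℕ) :
    ∃ C : ℝ, 0 < C ∧ ∀ x : ℝ, (1 + ‖x‖) ^ k * ‖iteratedFDeriv ℝ n (⇑f) x‖ ≤ C := by
  set S := (Finset.Iic ((k, n))).sup (fun m => SchwartzMap.seminorm ℝ m.1 m.2) f with hS
  have hS0 : 0 ≤ S := apply_nonneg _ f
  refine ⟨2 ^ k * S + 1, by positivity, fun x => ?_⟩
  have := SchwartzMap.one_add_le_sup_seminorm_apply (𝕜 := ℝ) (m := (k, n)) le_rfl le_rfl f x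
  linarith

lemma decay_rpow (f : SchwartzMap ℝ ℝ) (r : ℝ) :
    ∃ C : ℝ, 0 < C ∧ ∀ x : ℝ, |f x| ≤ C * (1 + |x|) ^ (-r) := by
  obtain ⟨C, hC, h⟩ := decay_one_add f ⌈r⌉₊ 0
  refine ⟨C, hC, fun x => ?_⟩
  have hb : (1:ℝ) ≤ 1 + |x| := le_add_of_nonneg_right (abs_nonneg x)
  have hb0 : (0:ℝ) < 1 + |x| := by linarith
  have h1 : |f x| * (1 + |x|) ^ ((⌈r⌉₊ : ℝ)) ≤ C := by
    have hx := h x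
    rw [norm_iteratedFDeriv_zero, Real.norm_eq_abs, Real.norm_eq_abs] at hx
    rw [Real.rpow_natCast]
    linarith [hx, mul_comm ((1 + |x|) ^ ⌈r⌉₊) (|f x|)]
  have h2 : (1 + |x|) ^ (-(⌈r⌉₊ : ℝ)) ≤ (1 + |x|) ^ (-r) :=
    Real.rpow_le_rpow_of_exponent_le hb (neg_le_neg (Nat.le_ceil r))
  have key : |f x| ≤ C * (1 + |x|) ^ (-(⌈r⌉₊ : ℝ)) := by
    have e : |f x| = |f x| * (1 + |x|) ^ ((⌈r⌉₊ : ℝ)) * (1 + |x|) ^ (-(⌈r⌉₊ : ℝ)) := by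
      rw [mul_assoc, ← Real.rpow_add hb0, add_neg_cancel, Real.rpow_zero, mul_one]
    rw [e]
    exact mul_le_mul_of_nonneg_right h1 (Real.rpow_nonneg hb0.le _)
  exact key.trans (mul_le_mul_of_nonneg_left h2 hC.le)

lemma ftilde_decay (f : SchwartzMap ℝ ℝ) (r : ℝ) (hr : 0 ≤ r) :
    ∃ C : ℝ, 0 < C ∧ ∀ y : ℝ, |ftilde (fun v => f v) y| ≤ C * (1 + |y|) ^ (-r) := by
  obtain ⟨C, hC, h⟩ := decay_rpow f r
  refine ⟨C * 2 ^ r, by positivity, fun y => ?_⟩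
  have hby : (0:ℝ) < 1 + |y| := by positivity
  have key : ∀ v ∈ Set.uIoc (y - 1) y, ‖f v‖ ≤ C * 2 ^ r * (1 + |y|) ^ (-r) := by
    intro v hv
    rw [Set.uIoc_of_le (by linarith : y - 1 ≤ y)] at hv
    have h1 : |y - v| ≤ 1 := by
      rw [abs_le]; exact ⟨by linarith [hv.2], by linarith [hv.1]⟩
    have h2 : 1 + |y| ≤ (1 + |v|) * 2 := by
      have := one_add_abs_le y v
      nlinarith [abs_nonneg v]
    have h3 : (1 + |v|) ^ (-r) ≤ (2:ℝ) ^ r * (1 + |y|) ^ (-r) :=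
      rpow_helper hr (le_add_of_nonneg_right (abs_nonneg v))
        (le_add_of_nonneg_right (abs_nonneg y)) one_le_two h2
    calc ‖f v‖ = |f v| := rfl
      _ ≤ C * (1 + |v|) ^ (-r) := h v
      _ ≤ C * ((2:ℝ) ^ r * (1 + |y|) ^ (-r)) := mul_le_mul_of_nonneg_left h3 hC.le
      _ = C * 2 ^ r * (1 + |y|) ^ (-r) := by ring
  have hnorm := intervalIntegral.norm_integral_le_of_norm_le_const key
  have e1 : |y - (y - 1)| = 1 := by norm_num
  rw [e1, mul_one] at hnorm
  exact hnorm

noncomputable def Gint (f : ℝ → ℝ) (y : ℝ) : ℝ := ∫ v in (0:ℝ)..y, f v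

lemma hasDerivAt_Gint (f : SchwartzMap ℝ ℝ) (y : ℝ) :
    HasDerivAt (Gint (fun v => f v)) (f y) y :=
  intervalIntegral.integral_hasDerivAt_right (f.continuous.intervalIntegrable _ _)
    (f.continuous.stronglyMeasurableAtFilter _ _) f.continuous.continuousAt

lemma Gint_smooth (f : SchwartzMap ℝ ℝ) : ContDiff ℝ ∞ (Gint (fun v => f v)) := by
  rw [contDiff_infty_iff_deriv]
  constructor
  · exact fun y => (hasDerivAt_Gint f y).differentiableAt
  · have hd : deriv (Gint (fun v => f v)) = fun y => f y :=
      funext fun y => (hasDerivAt_Gint f y).deriv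
    rw [hd]
    exact f.smooth ⊤

lemma ftilde_eq (f : SchwartzMap ℝ ℝ) (y : ℝ) :
    ftilde (fun v => f v) y = Gint (fun v => f v) y - Gint (fun v => f v) (y - 1) := by
  have h := intervalIntegral.integral_add_adjacent_intervals (μ := volume)
    (f.continuous.intervalIntegrable 0 (y - 1)) (f.continuous.intervalIntegrable (y - 1) y)
  simp only [ftilde, Gint]
  linarith

lemma hasDerivAt_F (f : SchwartzMap ℝ ℝ) (x : ℝ) :
    HasDerivAt (fun y => Gint (fun v => f v) y - Gint (fun v => f v) (y - 1))
      (f x - f (x - 1)) x := by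
  have h2 : HasDerivAt (fun y : ℝ => Gint (fun v => f v) (y - 1)) (f (x - 1)) x := by
    have := (hasDerivAt_Gint f (x - 1)).comp x ((hasDerivAt_id x).sub_const 1)
    simpa [Function.comp_def] using this
  exact (hasDerivAt_Gint f x).sub h2

lemma deriv_F (f : SchwartzMap ℝ ℝ) :
    deriv (fun y => Gint (fun v => f v) y - Gint (fun v => f v) (y - 1))
      = fun y => f y - f (y - 1) :=
  funext fun x => (hasDerivAt_F f x).deriv

noncomputable def Ftilde (f : SchwartzMap ℝ ℝ) : SchwartzMap ℝ ℝ where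
  toFun := fun y => Gint (fun v => f v) y - Gint (fun v => f v) (y - 1)
  smooth' := by
    have h1 : ContDiff ℝ ∞ (fun y : ℝ => y - 1) := contDiff_id.sub contDiff_const
    have h2 : ContDiff ℝ ∞ (fun y : ℝ => Gint (fun v => f v) (y - 1)) :=
      (Gint_smooth f).comp h1
    exact (Gint_smooth f).sub h2
  decay' := by
    intro k n
    match n with
    | 0 =>
      obtain ⟨C, hC, h⟩ := ftilde_decay f (k : ℝ) (by positivity)
      refine ⟨C, fun x => ?_⟩
      have hb0 : (0:ℝ) < 1 + |x| := by positivity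
      rw [norm_iteratedFDeriv_zero]
      have e : ‖Gint (fun v => f v) x - Gint (fun v => f v) (x - 1)‖
          = |ftilde (fun v => f v) x| := by rw [ftilde_eq f x]; rfl
      rw [e]
      calc ‖x‖ ^ k * |ftilde (fun v => f v) x|
          ≤ (1 + |x|) ^ k * (C * (1 + |x|) ^ (-(k:ℝ))) := by
            apply mul_le_mul _ (h x) (abs_nonneg _) (by positivity)
            exact pow_le_pow_left₀ (norm_nonneg x)
              (by rw [Real.norm_eq_abs]; linarith) k
        _ = C * ((1 + |x|) ^ ((k:ℝ)) * (1 + |x|) ^ (-(k:ℝ))) := by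
            rw [Real.rpow_natCast]; ring
        _ = C := by rw [← Real.rpow_add hb0, add_neg_cancel, Real.rpow_zero, mul_one]
    | (m + 1) =>
      obtain ⟨C1, hC1p, h1⟩ := f.decay k m
      obtain ⟨C2, hC2p, h2⟩ := decay_one_add f k m
      refine ⟨C1 + C2, fun x => ?_⟩
      rw [norm_iteratedFDeriv_eq_norm_iteratedDeriv, iteratedDeriv_succ', deriv_F f]
      have hsplit : iteratedDeriv m (fun y => f y - f (y - 1)) x
          = iteratedDeriv m (fun y => f y) x - iteratedDeriv m (fun y => f (y - 1)) x := by
        have e : (fun y => f y - f (y - 1)) = (fun y : ℝ => f y) - (fun y => f (y - 1)) := rfl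
        rw [e, ← iteratedDerivWithin_univ, ← iteratedDerivWithin_univ, ← iteratedDerivWithin_univ]
        exact iteratedDerivWithin_sub (Set.mem_univ x) uniqueDiffOn_univ
          (f.smooth m).contDiffWithinAt
          (((f.smooth m).comp (contDiff_id.sub contDiff_const)).contDiffWithinAt)
      have hshift : iteratedDeriv m (fun y => f (y - 1)) x
          = iteratedDeriv m (fun y => f y) (x - 1) := by
        have h := iteratedDeriv_comp_add_const m (fun y => f y) (-1)
        simp only [← sub_eq_add_neg] at h
        exact congrFun h x
      rw [hsplit, hshift]
      have hxk : ‖x‖ ^ k * ‖iteratedDeriv m (fun y => f y) x‖ ≤ C1 := by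
        rw [← norm_iteratedFDeriv_eq_norm_iteratedDeriv]; exact h1 x
      have hxk2 : ‖x‖ ^ k * ‖iteratedDeriv m (fun y => f y) (x - 1)‖ ≤ C2 := by
        rw [← norm_iteratedFDeriv_eq_norm_iteratedDeriv]
        refine le_trans ?_ (h2 (x - 1))
        apply mul_le_mul_of_nonneg_right _ (norm_nonneg _)
        apply pow_le_pow_left₀ (norm_nonneg x)
        rw [Real.norm_eq_abs, Real.norm_eq_abs]
        have h := abs_add_le (x - 1) (1:ℝ)
        simp only [sub_add_cancel] at h
        calc |x| ≤ |x - 1| + |1| := h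
          _ = 1 + |x - 1| := by rw [abs_one]; ring
      calc ‖x‖ ^ k * ‖iteratedDeriv m (fun y => f y) x - iteratedDeriv m (fun y => f y) (x - 1)‖
          ≤ ‖x‖ ^ k * (‖iteratedDeriv m (fun y => f y) x‖
              + ‖iteratedDeriv m (fun y => f y) (x - 1)‖) := by
            apply mul_le_mul_of_nonneg_left (norm_sub_le _ _) (by positivity)
        _ = ‖x‖ ^ k * ‖iteratedDeriv m (fun y => f y) x‖
              + ‖x‖ ^ k * ‖iteratedDeriv m (fun y => f y) (x - 1)‖ := by ring
        _ ≤ C1 + C2 := add_le_add hxk hxk2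

lemma Ftilde_apply (f : SchwartzMap ℝ ℝ) (y : ℝ) :
    Ftilde f y = ftilde (fun v => f v) y := (ftilde_eq f y).symm

noncomputable def gInt (f : ℝ → ℝ) (t : ℝ) (k : ℤ) : ℝ := ∫ v in (0:ℝ)..t, f (v - (k:ℝ))

/-- decay of `gInt` in `k`. -/
lemma gInt_decay (f : SchwartzMap ℝ ℝ) (t : ℝ) (r : ℝ) (hr : 0 ≤ r) :
    ∃ C : ℝ, 0 < C ∧ ∀ k : ℤ, |gInt (fun v => f v) t k| ≤ C * (1 + |(k:ℝ)|) ^ (-r) := by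
  obtain ⟨C, hC, h⟩ := decay_rpow f r
  refine ⟨C * (1 + |t|) ^ r * (|t| + 1), by positivity, fun k => ?_⟩
  have hbk : (1:ℝ) ≤ 1 + |(k:ℝ)| := le_add_of_nonneg_right (abs_nonneg _)
  have key : ∀ v ∈ Set.uIoc (0:ℝ) t,
      ‖f (v - (k:ℝ))‖ ≤ C * (1 + |t|) ^ r * (1 + |(k:ℝ)|) ^ (-r) := by
    intro v hv
    have hvt : |v| ≤ |t| := by
      rcases le_total 0 t with hle | hle
      · rw [Set.uIoc_of_le hle] at hv
        rw [abs_le, abs_of_nonneg hle]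
        exact ⟨by linarith [hv.1], hv.2⟩
      · rw [Set.uIoc_of_ge hle] at hv
        rw [abs_le, abs_of_nonpos hle]
        exact ⟨by linarith [hv.1], by linarith [hv.2]⟩
    have h2 : 1 + |(k:ℝ)| ≤ (1 + |v - (k:ℝ)|) * (1 + |t|) := by
      have hh := one_add_abs_le (k:ℝ) ((k:ℝ) - v)
      have e1 : (k:ℝ) - ((k:ℝ) - v) = v := by ring
      rw [e1, abs_sub_comm ((k:ℝ)) v] at hh
      nlinarith [abs_nonneg (v - (k:ℝ)), abs_nonneg v]
    have h3 : (1 + |v - (k:ℝ)|) ^ (-r) ≤ (1 + |t|) ^ r * (1 + |(k:ℝ)|) ^ (-r) :=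
      rpow_helper hr (le_add_of_nonneg_right (abs_nonneg _)) hbk
        (le_add_of_nonneg_right (abs_nonneg t)) h2
    calc ‖f (v - (k:ℝ))‖ = |f (v - (k:ℝ))| := rfl
      _ ≤ C * (1 + |v - (k:ℝ)|) ^ (-r) := h _
      _ ≤ C * ((1 + |t|) ^ r * (1 + |(k:ℝ)|) ^ (-r)) := mul_le_mul_of_nonneg_left h3 hC.le
      _ = C * (1 + |t|) ^ r * (1 + |(k:ℝ)|) ^ (-r) := by ring
  have hnorm := intervalIntegral.norm_integral_le_of_norm_le_const key
  have e : |t - 0| = |t| := by norm_num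
  rw [e] at hnorm
  calc |gInt (fun v => f v) t k| ≤ C * (1 + |t|) ^ r * (1 + |(k:ℝ)|) ^ (-r) * |t| := hnorm
    _ ≤ C * (1 + |t|) ^ r * (|t| + 1) * (1 + |(k:ℝ)|) ^ (-r) := by
        have h4 : (0:ℝ) ≤ C * (1 + |t|) ^ r := by positivity
        have h5 : (0:ℝ) ≤ (1 + |(k:ℝ)|) ^ (-r) := by positivity
        nlinarith [abs_nonneg t]

/-- summability base -/
lemma summable_base : Summable (fun q : ℤ => ((1:ℝ) + |(q:ℝ)|) ^ (-(2:ℝ))) := by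
  have hval : ∀ x : ℝ, 0 ≤ x → ((1:ℝ) + x) ^ (-(2:ℝ)) = 1 / (x + 1) ^ 2 := by
    intro x hx
    rw [Real.rpow_neg (by positivity), one_div]
    congr 1
    rw [show (2:ℝ) = ((2:ℕ):ℝ) by norm_num, Real.rpow_natCast]
    ring
  have hnat : Summable (fun n : ℕ => ((1:ℝ) + (n:ℝ)) ^ (-(2:ℝ))) := by
    have h0 : Summable (fun n : ℕ => 1 / ((n:ℝ) + 1) ^ 2) := by
      have := (summable_nat_add_iff (f := fun n : ℕ => 1 / (n:ℝ) ^ 2) 1).mpr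
        (Real.summable_one_div_nat_pow.mpr one_lt_two)
      refine this.congr fun n => ?_
      push_cast
      ring
    refine h0.congr fun n => ?_
    rw [hval (n:ℝ) (by positivity)]
  refine Summable.of_nat_of_neg (hnat.congr fun n => ?_) (hnat.congr fun n => ?_)
  · rw [Int.cast_natCast, abs_of_nonneg (by positivity : (0:ℝ) ≤ (n:ℝ))]
  · rw [Int.cast_neg, Int.cast_natCast, abs_neg, abs_of_nonneg (by positivity : (0:ℝ) ≤ (n:ℝ))]

lemma summable_of_decay2 {u : ℤ → ℝ} {c : ℝ}
    (h : ∀ k : ℤ, |u k| ≤ c * ((1:ℝ) + |(k:ℝ)|) ^ (-(2:ℝ))) :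
    Summable fun k : ℤ => |u k| :=
  (summable_base.mul_left c).of_nonneg_of_le (fun k => abs_nonneg _) h

end AbelAuxNS

open AbelAuxNS

theorem abel_transform_schwartz (f : SchwartzMap ℝ ℝ) (a : ℤ → ℝ)
    (κ μ0 : ℝ) (hκ : 0 < κ) (hμ0 : 0 < μ0)
    (ha : ∀ p : ℤ, |a p| ≤ κ * (1 + |(p : ℝ)|) ^ μ0)
    (A : ℤ → ℝ) (hA0 : A 0 = 0)
    (hApos : ∀ q : ℤ, 0 < q → A q = A (q - 1) + a q)
    (hAneg : ∀ q : ℤ, q < 0 → A q = A (q + 1) - a (q + 1)) :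
    (∃ F : SchwartzMap ℝ ℝ, ∀ y : ℝ, F y = ftilde (fun v => f v) y) ∧
    (∃ κ' μ' : ℝ, 0 < κ' ∧ 0 < μ' ∧ ∀ q : ℤ, |A q| ≤ κ' * (1 + |(q : ℝ)|) ^ μ') ∧
    (∀ t : ℝ,
      Summable (fun k : ℤ => |a k * ∫ v in (0 : ℝ)..t, f (v - (k : ℝ))|) ∧
      Summable (fun q : ℤ =>
        |A q * (ftilde (fun v => f v) (t - (q : ℝ)) - ftilde (fun v => f v) (-(q : ℝ)))|) ∧
      (∑' k : ℤ, a k * ∫ v in (0 : ℝ)..t, f (v - (k : ℝ))) =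
        ∑' q : ℤ,
          A q * (ftilde (fun v => f v) (t - (q : ℝ)) - ftilde (fun v => f v) (-(q : ℝ)))) := by
  -- growth bound for A
  -- growth bound for A
  have hAbnd : ∀ q : ℤ, |A q| ≤ κ * |(q:ℝ)| * (1 + |(q:ℝ)|) ^ μ0 := by
    intro q
    induction q using Int.induction_on with
    | zero => simp [hA0]
    | succ n ih =>
      have key := hApos ((n:ℤ) + 1) (by positivity)
      rw [show ((n:ℤ) + 1) - 1 = (n:ℤ) by ring] at key
      rw [key]
      have hb := ha ((n:ℤ) + 1)
      push_cast at hb ih ⊢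
      rw [abs_of_nonneg (by positivity : (0:ℝ) ≤ (n:ℝ))] at ih
      rw [abs_of_nonneg (by positivity : (0:ℝ) ≤ (n:ℝ) + 1)] at hb ⊢
      have m1 : (1 + (n:ℝ)) ^ μ0 ≤ (1 + ((n:ℝ) + 1)) ^ μ0 :=
        Real.rpow_le_rpow (by positivity) (by linarith) hμ0.le
      have p1 : (0:ℝ) ≤ (1 + ((n:ℝ) + 1)) ^ μ0 := by positivity
      have habs := abs_add_le (A (n:ℤ)) (a ((n:ℤ) + 1))
      nlinarith [mul_le_mul_of_nonneg_left m1 (by positivity : (0:ℝ) ≤ κ * (n:ℝ))]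
    | pred n ih =>
      have key := hAneg (-(n:ℤ) - 1) (by omega)
      rw [show (-(n:ℤ) - 1) + 1 = -(n:ℤ) by ring] at key
      rw [key]
      have hb := ha (-(n:ℤ))
      push_cast at hb ih ⊢
      rw [abs_neg] at ih hb
      rw [abs_of_nonneg (by positivity : (0:ℝ) ≤ (n:ℝ))] at ih hb
      have hn0 : (0:ℝ) ≤ (n:ℝ) := by positivity
      rw [show |(-(n:ℝ) - 1)| = (n:ℝ) + 1 by
        rw [abs_of_nonpos (by linarith : -(n:ℝ) - 1 ≤ 0)]; ring]
      have m1 : (1 + (n:ℝ)) ^ μ0 ≤ (1 + ((n:ℝ) + 1)) ^ μ0 :=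
        Real.rpow_le_rpow (by positivity) (by linarith) hμ0.le
      have p1 : (0:ℝ) ≤ (1 + ((n:ℝ) + 1)) ^ μ0 := by positivity
      have habs := abs_sub (A (-(n:ℤ))) (a (-(n:ℤ)))
      nlinarith [mul_le_mul_of_nonneg_left m1 (by positivity : (0:ℝ) ≤ κ * (n:ℝ))]
  have hA' : ∀ q : ℤ, |A q| ≤ κ * (1 + |(q:ℝ)|) ^ (μ0 + 1) := by
    intro q
    have e : (1 + |(q:ℝ)|) ^ (μ0 + 1) = (1 + |(q:ℝ)|) ^ μ0 * (1 + |(q:ℝ)|) :=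
      Real.rpow_add_one (by positivity) μ0
    rw [e]
    have h1 := hAbnd q
    have h2 : (0:ℝ) ≤ (1 + |(q:ℝ)|) ^ μ0 := by positivity
    nlinarith [abs_nonneg ((q:ℝ))]
  refine ⟨⟨Ftilde f, Ftilde_apply f⟩, ⟨κ, μ0 + 1, hκ, by linarith, hA'⟩, fun t => ?_⟩
  obtain ⟨Cg1, hCg1, hg1⟩ := gInt_decay f t (μ0 + 2) (by linarith)
  obtain ⟨Cg2, hCg2, hg2⟩ := gInt_decay f t (μ0 + 3) (by linarith)
  obtain ⟨Cf, hCf, hf⟩ := ftilde_decay f (μ0 + 3) (by linarith)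
  have hcomb1 : ∀ k : ℤ, ((1:ℝ) + |(k:ℝ)|) ^ μ0 * (1 + |(k:ℝ)|) ^ (-(μ0 + 2))
      = (1 + |(k:ℝ)|) ^ (-(2:ℝ)) := by
    intro k
    rw [← Real.rpow_add (by positivity)]
    congr 1
    ring
  have hcomb2 : ∀ k : ℤ, ((1:ℝ) + |(k:ℝ)|) ^ (μ0 + 1) * (1 + |(k:ℝ)|) ^ (-(μ0 + 3))
      = (1 + |(k:ℝ)|) ^ (-(2:ℝ)) := by
    intro k
    rw [← Real.rpow_add (by positivity)]
    congr 1
    ring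
  -- summability statements
  have S1 : Summable fun k : ℤ => |a k * gInt (fun v => f v) t k| := by
    refine summable_of_decay2 (c := κ * Cg1) fun k => ?_
    rw [abs_mul]
    calc |a k| * |gInt (fun v => f v) t k|
        ≤ (κ * (1 + |(k:ℝ)|) ^ μ0) * (Cg1 * (1 + |(k:ℝ)|) ^ (-(μ0 + 2))) :=
          mul_le_mul (ha k) (hg1 k) (abs_nonneg _) (by positivity)
      _ = κ * Cg1 * ((1 + |(k:ℝ)|) ^ μ0 * (1 + |(k:ℝ)|) ^ (-(μ0 + 2))) := by ring
      _ = κ * Cg1 * (1 + |(k:ℝ)|) ^ (-(2:ℝ)) := by rw [hcomb1 k]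
  have hft : ∀ q : ℤ,
      |ftilde (fun v => f v) (t - (q:ℝ)) - ftilde (fun v => f v) (-(q:ℝ))|
        ≤ (Cf * (1 + |t|) ^ (μ0 + 3) + Cf) * (1 + |(q:ℝ)|) ^ (-(μ0 + 3)) := by
    intro q
    have hyx : (1:ℝ) + |(q:ℝ)| ≤ (1 + |t - (q:ℝ)|) * (1 + |t|) := by
      have hh := one_add_abs_le (-(q:ℝ)) (t - (q:ℝ))
      rw [show (-(q:ℝ)) - (t - (q:ℝ)) = -t by ring, abs_neg, abs_neg] at hh
      exact hh
    have b2 : (1 + |t - (q:ℝ)|) ^ (-(μ0 + 3)) ≤ (1 + |t|) ^ (μ0 + 3) * (1 + |(q:ℝ)|) ^ (-(μ0 + 3)) :=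
      rpow_helper (by linarith) (le_add_of_nonneg_right (abs_nonneg _))
        (le_add_of_nonneg_right (abs_nonneg _)) (le_add_of_nonneg_right (abs_nonneg _)) hyx
    have b1 : |ftilde (fun v => f v) (t - (q:ℝ))|
        ≤ Cf * ((1 + |t|) ^ (μ0 + 3) * (1 + |(q:ℝ)|) ^ (-(μ0 + 3))) :=
      (hf (t - (q:ℝ))).trans (mul_le_mul_of_nonneg_left b2 hCf.le)
    have b3 : |ftilde (fun v => f v) (-(q:ℝ))| ≤ Cf * (1 + |(q:ℝ)|) ^ (-(μ0 + 3)) := by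
      have := hf (-(q:ℝ))
      rwa [abs_neg] at this
    calc |ftilde (fun v => f v) (t - (q:ℝ)) - ftilde (fun v => f v) (-(q:ℝ))|
        ≤ |ftilde (fun v => f v) (t - (q:ℝ))| + |ftilde (fun v => f v) (-(q:ℝ))| := abs_sub _ _
      _ ≤ Cf * ((1 + |t|) ^ (μ0 + 3) * (1 + |(q:ℝ)|) ^ (-(μ0 + 3)))
            + Cf * (1 + |(q:ℝ)|) ^ (-(μ0 + 3)) := add_le_add b1 b3
      _ = (Cf * (1 + |t|) ^ (μ0 + 3) + Cf) * (1 + |(q:ℝ)|) ^ (-(μ0 + 3)) := by ring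
  have S2 : Summable fun q : ℤ =>
      |A q * (ftilde (fun v => f v) (t - (q:ℝ)) - ftilde (fun v => f v) (-(q:ℝ)))| := by
    refine summable_of_decay2 (c := κ * (Cf * (1 + |t|) ^ (μ0 + 3) + Cf)) fun q => ?_
    rw [abs_mul]
    calc |A q| * |ftilde (fun v => f v) (t - (q:ℝ)) - ftilde (fun v => f v) (-(q:ℝ))|
        ≤ (κ * (1 + |(q:ℝ)|) ^ (μ0 + 1))
            * ((Cf * (1 + |t|) ^ (μ0 + 3) + Cf) * (1 + |(q:ℝ)|) ^ (-(μ0 + 3))) :=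
          mul_le_mul (hA' q) (hft q) (abs_nonneg _) (by positivity)
      _ = κ * (Cf * (1 + |t|) ^ (μ0 + 3) + Cf)
            * ((1 + |(q:ℝ)|) ^ (μ0 + 1) * (1 + |(q:ℝ)|) ^ (-(μ0 + 3))) := by ring
      _ = κ * (Cf * (1 + |t|) ^ (μ0 + 3) + Cf) * (1 + |(q:ℝ)|) ^ (-(2:ℝ)) := by rw [hcomb2 q]
  have S3 : Summable fun k : ℤ => |A k * gInt (fun v => f v) t k| := by
    refine summable_of_decay2 (c := κ * Cg2) fun k => ?_
    rw [abs_mul]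
    calc |A k| * |gInt (fun v => f v) t k|
        ≤ (κ * (1 + |(k:ℝ)|) ^ (μ0 + 1)) * (Cg2 * (1 + |(k:ℝ)|) ^ (-(μ0 + 3))) :=
          mul_le_mul (hA' k) (hg2 k) (abs_nonneg _) (by positivity)
      _ = κ * Cg2 * ((1 + |(k:ℝ)|) ^ (μ0 + 1) * (1 + |(k:ℝ)|) ^ (-(μ0 + 3))) := by ring
      _ = κ * Cg2 * (1 + |(k:ℝ)|) ^ (-(2:ℝ)) := by rw [hcomb2 k]
  have S4 : Summable fun k : ℤ => |A (k - 1) * gInt (fun v => f v) t k| := by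
    refine summable_of_decay2 (c := κ * 2 ^ (μ0 + 1) * Cg2) fun k => ?_
    rw [abs_mul]
    have hA2 : |A (k - 1)| ≤ κ * (2 ^ (μ0 + 1) * (1 + |(k:ℝ)|) ^ (μ0 + 1)) := by
      have h1 := hA' (k - 1)
      push_cast at h1
      have h2 : (1 + |(k:ℝ) - 1|) ^ (μ0 + 1) ≤ (2 * (1 + |(k:ℝ)|)) ^ (μ0 + 1) := by
        apply Real.rpow_le_rpow (by positivity) _ (by linarith)
        have := abs_sub ((k:ℝ)) (1:ℝ)
        rw [abs_one] at this
        linarith [abs_nonneg ((k:ℝ))]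
      rw [Real.mul_rpow (by norm_num) (by positivity)] at h2
      calc |A (k - 1)| ≤ κ * (1 + |(k:ℝ) - 1|) ^ (μ0 + 1) := h1
        _ ≤ κ * (2 ^ (μ0 + 1) * (1 + |(k:ℝ)|) ^ (μ0 + 1)) :=
            mul_le_mul_of_nonneg_left h2 hκ.le
    calc |A (k - 1)| * |gInt (fun v => f v) t k|
        ≤ (κ * (2 ^ (μ0 + 1) * (1 + |(k:ℝ)|) ^ (μ0 + 1)))
            * (Cg2 * (1 + |(k:ℝ)|) ^ (-(μ0 + 3))) :=
          mul_le_mul hA2 (hg2 k) (abs_nonneg _) (by positivity)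
      _ = κ * 2 ^ (μ0 + 1) * Cg2
            * ((1 + |(k:ℝ)|) ^ (μ0 + 1) * (1 + |(k:ℝ)|) ^ (-(μ0 + 3))) := by ring
      _ = κ * 2 ^ (μ0 + 1) * Cg2 * (1 + |(k:ℝ)|) ^ (-(2:ℝ)) := by rw [hcomb2 k]
  -- the Abel relation between a and A
  have haA : ∀ k : ℤ, a k = A k - A (k - 1) := by
    intro k
    rcases lt_or_ge 0 k with h | h
    · have := hApos k h
      linarith
    · have h2 := hAneg (k - 1) (by omega)
      rw [show (k - 1) + 1 = k by ring] at h2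
      linarith
  have hsum3 : Summable fun k : ℤ => A k * gInt (fun v => f v) t k := S3.of_abs
  have hsum4 : Summable fun k : ℤ => A (k - 1) * gInt (fun v => f v) t k := S4.of_abs
  have hsum5 : Summable fun q : ℤ => A q * gInt (fun v => f v) t (q + 1) := by
    have h := ((Equiv.addRight (1:ℤ)).summable_iff
      (f := fun k : ℤ => A (k - 1) * gInt (fun v => f v) t k)).mpr hsum4
    refine h.congr fun q => ?_
    show A ((q + 1) - 1) * gInt (fun v => f v) t (q + 1) = _
    rw [add_sub_cancel_right]
  have e2sum : (∑' k : ℤ, A (k - 1) * gInt (fun v => f v) t k)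
      = ∑' q : ℤ, A q * gInt (fun v => f v) t (q + 1) := by
    rw [← Equiv.tsum_eq (Equiv.addRight (1:ℤ))
      (fun k : ℤ => A (k - 1) * gInt (fun v => f v) t k)]
    refine tsum_congr fun q => ?_
    show A ((q + 1) - 1) * gInt (fun v => f v) t (q + 1) = _
    rw [add_sub_cancel_right]
  -- interval integral identity
  have hgsub : ∀ q : ℤ, gInt (fun v => f v) t q - gInt (fun v => f v) t (q + 1)
      = ftilde (fun v => f v) (t - (q:ℝ)) - ftilde (fun v => f v) (-(q:ℝ)) := by
    intro q
    have hint : ∀ a b : ℝ, IntervalIntegrable (fun v => f v) volume a b :=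
      fun a b => f.continuous.intervalIntegrable a b
    have hgq : ∀ c : ℝ, (∫ v in (0:ℝ)..t, f (v - c)) = ∫ x in (-c)..(t - c), f x := by
      intro c
      rw [intervalIntegral.integral_comp_sub_right (fun v => f v) c]
      norm_num
    have e1 : gInt (fun v => f v) t q = ∫ x in (-(q:ℝ))..(t - (q:ℝ)), f x := hgq (q:ℝ)
    have e2 : gInt (fun v => f v) t (q + 1)
        = ∫ x in (-(q:ℝ) - 1)..(t - (q:ℝ) - 1), f x := by
      have h : gInt (fun v => f v) t (q + 1)
          = ∫ x in (-(((q + 1 : ℤ)):ℝ))..(t - (((q + 1 : ℤ)):ℝ)), f x := hgq _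
      rw [h, show (-(((q + 1 : ℤ)):ℝ)) = -(q:ℝ) - 1 by push_cast; ring,
        show (t - (((q + 1 : ℤ)):ℝ)) = t - (q:ℝ) - 1 by push_cast; ring]
    have h1 := intervalIntegral.integral_add_adjacent_intervals (μ := volume)
      (hint (-(q:ℝ) - 1) (-(q:ℝ))) (hint (-(q:ℝ)) (t - (q:ℝ)))
    have h2 := intervalIntegral.integral_add_adjacent_intervals (μ := volume)
      (hint (-(q:ℝ) - 1) (t - (q:ℝ) - 1)) (hint (t - (q:ℝ) - 1) (t - (q:ℝ)))
    have e3 : ftilde (fun v => f v) (t - (q:ℝ))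
        = ∫ x in (t - (q:ℝ) - 1)..(t - (q:ℝ)), f x := rfl
    have e4 : ftilde (fun v => f v) (-(q:ℝ))
        = ∫ x in (-(q:ℝ) - 1)..(-(q:ℝ)), f x := rfl
    rw [e1, e2, e3, e4]
    linarith
  refine ⟨S1, S2, ?_⟩
  calc (∑' k : ℤ, a k * ∫ v in (0:ℝ)..t, f (v - (k:ℝ)))
      = ∑' k : ℤ, (A k * gInt (fun v => f v) t k - A (k - 1) * gInt (fun v => f v) t k) := by
        refine tsum_congr fun k => ?_
        rw [show (∫ v in (0:ℝ)..t, f (v - (k:ℝ))) = gInt (fun v => f v) t k from rfl, haA k]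
        ring
    _ = (∑' k : ℤ, A k * gInt (fun v => f v) t k)
          - ∑' k : ℤ, A (k - 1) * gInt (fun v => f v) t k := Summable.tsum_sub hsum3 hsum4
    _ = (∑' k : ℤ, A k * gInt (fun v => f v) t k)
          - ∑' q : ℤ, A q * gInt (fun v => f v) t (q + 1) := by rw [e2sum]
    _ = ∑' q : ℤ, (A q * gInt (fun v => f v) t q - A q * gInt (fun v => f v) t (q + 1)) :=
          (Summable.tsum_sub hsum3 hsum5).symm
    _ = ∑' q : ℤ, A q * (ftilde (fun v => f v) (t - (q:ℝ)) - ftilde (fun v => f v) (-(q:ℝ))) := by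
        refine tsum_congr fun q => ?_
        rw [← mul_sub, hgsub q]
end

section
/- Let d ≥ 1 be an integer and let f_1,…,f_d : ℝ → ℝ be measurable functions which are bounded and Lebesgue integrable. Then for all j = (j_1,…,j_d) ∈ ℤ^d and k = (k_1,…,k_d) ∈ ℤ^d, and any index n ∈ {1,…,d} with j_n = max_{ℓ∈{1,…,d}} j_ℓ, one has ( ∫_ℝ ∏_{ℓ=1}^{d} f_ℓ(2^{j_ℓ}s − k_ℓ) ds )² ≤ ‖f_n‖_{L¹(ℝ)} · 2^{−j_n} · ∫_ℝ |f_n(2^{j_n}s − k_n)| ∏_{ℓ≠n} |f_ℓ(2^{j_ℓ}s − k_ℓ)|² ds. -/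
open MeasureTheory

theorem sq_integral_prod_le (d : ℕ) (hd : 1 ≤ d) (f : Fin d → ℝ → ℝ)
    (hmeas : ∀ ℓ, Measurable (f ℓ))
    (hbdd : ∀ ℓ, ∃ C : ℝ, ∀ x : ℝ, |f ℓ x| ≤ C)
    (hint : ∀ ℓ, Integrable (f ℓ)) :
    ∀ (j k : Fin d → ℤ) (n : Fin d), (∀ ℓ, j ℓ ≤ j n) →
      (∫ s : ℝ, ∏ ℓ, f ℓ ((2 : ℝ) ^ (j ℓ) * s - (k ℓ : ℝ))) ^ 2 ≤
        (∫ x : ℝ, |f n x|) * (2 : ℝ) ^ (-(j n)) *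
          ∫ s : ℝ, |f n ((2 : ℝ) ^ (j n) * s - (k n : ℝ))| *
            ∏ ℓ ∈ Finset.univ.erase n, |f ℓ ((2 : ℝ) ^ (j ℓ) * s - (k ℓ : ℝ))| ^ 2 := by
  intro j k n hjn
  -- notation
  set g : Fin d → ℝ → ℝ := fun ℓ s => f ℓ ((2 : ℝ) ^ (j ℓ) * s - (k ℓ : ℝ)) with hg
  have hapos : ∀ ℓ, (0 : ℝ) < (2 : ℝ) ^ (j ℓ) := fun ℓ => zpow_pos (by norm_num) _
  have hgmeas : ∀ ℓ, Measurable (g ℓ) := by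
    intro ℓ
    exact (hmeas ℓ).comp ((measurable_const_mul _).sub_const _)
  have hgint : ∀ ℓ, Integrable (g ℓ) := by
    intro ℓ
    have h1 : Integrable (fun x : ℝ => f ℓ (x - (k ℓ : ℝ))) := (hint ℓ).comp_sub_right _
    exact h1.comp_mul_left' (hapos ℓ).ne'
  -- bounds
  choose C hC using hbdd
  have hCnonneg : ∀ ℓ, 0 ≤ C ℓ := fun ℓ => (abs_nonneg _).trans (hC ℓ 0)
  -- Cauchy–Schwarz setup
  set u : ℝ → ℝ := fun s => Real.sqrt |g n s| with hu
  set w : ℝ → ℝ := fun s => Real.sqrt |g n s| * ∏ ℓ ∈ Finset.univ.erase n, |g ℓ s| with hw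
  have humeas : Measurable u := (hgmeas n).abs.sqrt
  have hwmeas : Measurable w :=
    (hgmeas n).abs.sqrt.mul (Finset.measurable_prod _ fun ℓ _ => (hgmeas ℓ).abs)
  have husq : ∀ s, u s ^ 2 = |g n s| := fun s => Real.sq_sqrt (abs_nonneg _)
  have hwsq : ∀ s, w s ^ 2 = |g n s| * ∏ ℓ ∈ Finset.univ.erase n, |g ℓ s| ^ 2 := by
    intro s
    rw [hw, mul_pow, husq s, Finset.prod_pow]
  -- integrability of the squares
  have hintu2 : Integrable (fun s => u s ^ 2) := by
    simpa only [husq] using (hgint n).abs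
  have hintw2 : Integrable (fun s => w s ^ 2) := by
    simp only [hwsq]
    have : Integrable (fun s => (∏ ℓ ∈ Finset.univ.erase n, |g ℓ s| ^ 2) * |g n s|) := by
      refine (hgint n).abs.bdd_mul (c := ∏ ℓ ∈ Finset.univ.erase n, C ℓ ^ 2) ?_ ?_
      · exact (Finset.measurable_prod _ fun ℓ _ => (hgmeas ℓ).abs.pow_const 2).aestronglyMeasurable
      · refine Filter.Eventually.of_forall fun x => ?_
        rw [Real.norm_eq_abs, Finset.abs_prod]
        refine Finset.prod_le_prod (fun ℓ _ => abs_nonneg _) fun ℓ _ => ?_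
        rw [abs_pow, abs_abs]
        exact pow_le_pow_left₀ (abs_nonneg _) (hC ℓ _) 2
    exact this.congr (Filter.Eventually.of_forall fun s => mul_comm _ _)
  -- integrability of the full product
  have hintprod : Integrable (fun s => ∏ ℓ, g ℓ s) := by
    have : Integrable (fun s => (∏ ℓ ∈ Finset.univ.erase n, g ℓ s) * g n s) := by
      refine (hgint n).bdd_mul (c := ∏ ℓ ∈ Finset.univ.erase n, C ℓ) ?_ ?_
      · exact (Finset.measurable_prod _ fun ℓ _ => hgmeas ℓ).aestronglyMeasurable
      · refine Filter.Eventually.of_forall fun x => ?_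
        rw [Real.norm_eq_abs, Finset.abs_prod]
        exact Finset.prod_le_prod (fun ℓ _ => abs_nonneg _) fun ℓ _ => hC ℓ _
    refine this.congr (Filter.Eventually.of_forall fun s => ?_)
    show (∏ ℓ ∈ Finset.univ.erase n, g ℓ s) * g n s = ∏ ℓ, g ℓ s
    rw [mul_comm]
    exact Finset.mul_prod_erase Finset.univ (fun ℓ => g ℓ s) (Finset.mem_univ n)
  -- Memℒp
  have hmemu : MemLp u (ENNReal.ofReal 2) volume := by
    rw [show ENNReal.ofReal 2 = 2 by norm_num]
    exact (memLp_two_iff_integrable_sq humeas.aestronglyMeasurable).2 hintu2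
  have hmemw : MemLp w (ENNReal.ofReal 2) volume := by
    rw [show ENNReal.ofReal 2 = 2 by norm_num]
    exact (memLp_two_iff_integrable_sq hwmeas.aestronglyMeasurable).2 hintw2
  have hpq : (2 : ℝ).HolderConjugate 2 := Real.HolderConjugate.two_two
  have hCS := integral_mul_le_Lp_mul_Lq_of_nonneg hpq
    (Filter.Eventually.of_forall fun s => Real.sqrt_nonneg _ : 0 ≤ᵐ[volume] u)
    (Filter.Eventually.of_forall fun s =>
      mul_nonneg (Real.sqrt_nonneg _) (Finset.prod_nonneg fun ℓ _ => abs_nonneg _)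
      : 0 ≤ᵐ[volume] w) hmemu hmemw
  -- pointwise: u * w = |∏ g ℓ|
  have huw : ∀ s, u s * w s = |∏ ℓ, g ℓ s| := by
    intro s
    rw [hu, hw, ← mul_assoc, Real.mul_self_sqrt (abs_nonneg _), Finset.abs_prod]
    exact Finset.mul_prod_erase Finset.univ (fun ℓ => |g ℓ s|) (Finset.mem_univ n)
  -- change of variables for X = ∫ |g n|
  have hX : (∫ s : ℝ, u s ^ 2) = (2 : ℝ) ^ (-(j n)) * ∫ x : ℝ, |f n x| := by
    simp only [husq]
    have h1 : (∫ s : ℝ, |g n s|) =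
        |((2 : ℝ) ^ (j n))⁻¹| • ∫ x : ℝ, |f n (x - (k n : ℝ))| :=
      MeasureTheory.Measure.integral_comp_mul_left (fun x => |f n (x - (k n : ℝ))|) ((2 : ℝ) ^ (j n))
    have h2 : (∫ x : ℝ, |f n (x - (k n : ℝ))|) = ∫ x : ℝ, |f n x| :=
      integral_sub_right_eq_self (fun x => |f n x|) _
    rw [h1, h2, smul_eq_mul, abs_of_pos (inv_pos.2 (hapos n)), ← zpow_neg]
  have hY : (∫ s : ℝ, w s ^ 2) =
      ∫ s : ℝ, |f n ((2 : ℝ) ^ (j n) * s - (k n : ℝ))| *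
        ∏ ℓ ∈ Finset.univ.erase n, |f ℓ ((2 : ℝ) ^ (j ℓ) * s - (k ℓ : ℝ))| ^ 2 := by
    simp only [hwsq, hg]
  have hXnn : (0 : ℝ) ≤ ∫ s : ℝ, u s ^ 2 := integral_nonneg fun s => sq_nonneg _
  have hYnn : (0 : ℝ) ≤ ∫ s : ℝ, w s ^ 2 := integral_nonneg fun s => sq_nonneg _
  simp only [Real.rpow_two] at hCS
  calc (∫ s : ℝ, ∏ ℓ, f ℓ ((2 : ℝ) ^ (j ℓ) * s - (k ℓ : ℝ))) ^ 2
      = |∫ s : ℝ, ∏ ℓ, g ℓ s| ^ 2 := by rw [sq_abs]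
    _ ≤ (∫ s : ℝ, |∏ ℓ, g ℓ s|) ^ 2 := by
        refine pow_le_pow_left₀ (abs_nonneg _) ?_ 2
        simpa only [Real.norm_eq_abs] using
          norm_integral_le_integral_norm (μ := volume) (fun s => ∏ ℓ, g ℓ s)
    _ = (∫ s : ℝ, u s * w s) ^ 2 := by simp_rw [huw]
    _ ≤ ((∫ s : ℝ, u s ^ 2) ^ ((1 : ℝ) / 2) * (∫ s : ℝ, w s ^ 2) ^ ((1 : ℝ) / 2)) ^ 2 := by
        refine pow_le_pow_left₀ (integral_nonneg fun s => ?_) hCS 2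
        rw [huw]; exact abs_nonneg _
    _ = (∫ s : ℝ, u s ^ 2) * (∫ s : ℝ, w s ^ 2) := by
        rw [mul_pow, ← Real.rpow_natCast ((∫ s : ℝ, u s ^ 2) ^ ((1 : ℝ) / 2)) 2,
          ← Real.rpow_natCast ((∫ s : ℝ, w s ^ 2) ^ ((1 : ℝ) / 2)) 2,
          ← Real.rpow_mul hXnn, ← Real.rpow_mul hYnn]
        norm_num
    _ = (∫ x : ℝ, |f n x|) * (2 : ℝ) ^ (-(j n)) *
          ∫ s : ℝ, |f n ((2 : ℝ) ^ (j n) * s - (k n : ℝ))| *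
            ∏ ℓ ∈ Finset.univ.erase n, |f ℓ ((2 : ℝ) ^ (j ℓ) * s - (k ℓ : ℝ))| ^ 2 := by
        rw [hX, hY]; ring
end

section
/- Let h ∈ (1/2,1) and T > 2 be fixed real numbers. Then there exists a constant c > 0 such that for every integer n ≥ 0 one has Σ_{j=−∞}^{n} 2^{j(1−h)} √(log(3 + |j| + 2^{j} T)) ≤ c · 2^{n(1−h)} · √( log(3 + 2^{n} T) · log(3 + n) ), where the series on the left-hand side converges. -/
set_option maxHeartbeats 1000000 in
theorem sum_pow_sqrt_log_bound (h T : ℝ) (hh : h ∈ Set.Ioo (1 / 2 : ℝ) 1) (hT : 2 < T) :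
    ∃ c : ℝ, 0 < c ∧ ∀ n : ℕ,
      Summable (fun j : {j : ℤ // j ≤ (n : ℤ)} =>
        (2 : ℝ) ^ (((j : ℤ) : ℝ) * (1 - h)) *
          Real.sqrt (Real.log (3 + |((j : ℤ) : ℝ)| + (2 : ℝ) ^ ((j : ℤ) : ℝ) * T))) ∧
      (∑' j : {j : ℤ // j ≤ (n : ℤ)},
          (2 : ℝ) ^ (((j : ℤ) : ℝ) * (1 - h)) *
            Real.sqrt (Real.log (3 + |((j : ℤ) : ℝ)| + (2 : ℝ) ^ ((j : ℤ) : ℝ) * T)))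
        ≤ c * (2 : ℝ) ^ ((n : ℝ) * (1 - h)) *
            Real.sqrt (Real.log (3 + (2 : ℝ) ^ (n : ℝ) * T) * Real.log (3 + (n : ℝ))) := by
  obtain ⟨hh1, hh2⟩ := hh
  set r : ℝ := (2 : ℝ) ^ (-(1 - h)) with hr_def
  have hr0 : 0 < r := Real.rpow_pos_of_pos (by norm_num) _
  have hr1 : r < 1 := Real.rpow_lt_one_of_one_lt_of_neg (by norm_num) (by linarith)
  have hsum : Summable (fun k : ℕ => (3 + (k : ℝ)) * r ^ k) := by
    have h1 : Summable (fun k : ℕ => (3 : ℝ) * r ^ k) :=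
      (summable_geometric_of_lt_one hr0.le hr1).mul_left 3
    have h2 : Summable (fun k : ℕ => (k : ℝ) * r ^ k) := by
      simpa using summable_pow_mul_geometric_of_norm_lt_one 1
        (r := r) (by rwa [Real.norm_eq_abs, abs_of_pos hr0])
    simpa [add_mul] using h1.add h2
  set C : ℝ := ∑' k : ℕ, (3 + (k : ℝ)) * r ^ k with hC_def
  have hC : 0 < C := by
    refine Summable.tsum_pos hsum (fun k => by positivity) 0 (by norm_num)
  have hlog3 : (1 : ℝ) ≤ Real.log 3 := by
    rw [show (1:ℝ) = Real.log (Real.exp 1) by simp]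
    apply Real.log_le_log (Real.exp_pos 1)
    have := Real.exp_one_lt_d9
    linarith
  refine ⟨C, hC, fun n => ?_⟩
  set L : ℝ := Real.log (3 + (2 : ℝ) ^ (n : ℝ) * T) with hL_def
  set M : ℝ := Real.log (3 + (n : ℝ)) with hM_def
  have h2n : (0 : ℝ) < (2 : ℝ) ^ (n : ℝ) := Real.rpow_pos_of_pos (by norm_num) _
  have hL1 : 1 ≤ L := by
    refine le_trans hlog3 ?_
    apply Real.log_le_log (by norm_num)
    nlinarith
  have hM1 : 1 ≤ M := by
    refine le_trans hlog3 ?_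
    apply Real.log_le_log (by norm_num)
    have : (0:ℝ) ≤ (n:ℝ) := Nat.cast_nonneg n
    linarith
  set D : ℝ := (2 : ℝ) ^ ((n : ℝ) * (1 - h)) * Real.sqrt (L * M) with hD_def
  have hD0 : 0 ≤ D := by positivity
  -- the equivalence
  let e : ℕ ≃ {j : ℤ // j ≤ (n : ℤ)} :=
    { toFun := fun k => ⟨(n : ℤ) - k, by omega⟩
      invFun := fun j => ((n : ℤ) - j.1).toNat
      left_inv := fun k => by simp
      right_inv := fun j => Subtype.ext (by have := j.2; simp; omega) }
  set f : {j : ℤ // j ≤ (n : ℤ)} → ℝ := fun j =>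
    (2 : ℝ) ^ (((j : ℤ) : ℝ) * (1 - h)) *
      Real.sqrt (Real.log (3 + |((j : ℤ) : ℝ)| + (2 : ℝ) ^ ((j : ℤ) : ℝ) * T)) with hf_def
  have hf_nonneg : ∀ j, 0 ≤ f j := fun j => by
    apply mul_nonneg (Real.rpow_nonneg (by norm_num) _) (Real.sqrt_nonneg _)
  have key : ∀ k : ℕ, f (e k) ≤ D * ((3 + (k : ℝ)) * r ^ k) := by
    intro k
    have hjcast : ((((e k : {j : ℤ // j ≤ (n:ℤ)}) : ℤ)) : ℝ) = (n : ℝ) - (k : ℝ) := by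
      show (((n : ℤ) - (k:ℤ) : ℤ) : ℝ) = _
      push_cast; ring
    rw [hf_def]
    simp only [hjcast]
    have hA : (2 : ℝ) ^ (((n : ℝ) - (k : ℝ)) * (1 - h)) =
        (2 : ℝ) ^ ((n : ℝ) * (1 - h)) * r ^ k := by
      rw [hr_def, ← Real.rpow_natCast ((2:ℝ) ^ (-(1-h))) k,
        ← Real.rpow_mul (by norm_num : (0:ℝ) ≤ 2),
        ← Real.rpow_add (by norm_num : (0:ℝ) < 2)]
      ring_nf
    have habs : |(n : ℝ) - (k : ℝ)| ≤ (n : ℝ) + (k : ℝ) := by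
      have := abs_sub (n : ℝ) (k : ℝ)
      rw [abs_of_nonneg (Nat.cast_nonneg n : (0:ℝ) ≤ (n:ℝ)),
        abs_of_nonneg (Nat.cast_nonneg k : (0:ℝ) ≤ (k:ℝ))] at this
      exact this
    have h2j : (2 : ℝ) ^ ((n : ℝ) - (k : ℝ)) ≤ (2 : ℝ) ^ (n : ℝ) := by
      apply Real.rpow_le_rpow_of_exponent_le (by norm_num)
      have : (0:ℝ) ≤ (k:ℝ) := Nat.cast_nonneg k
      linarith
    have h2j0 : (0 : ℝ) < (2 : ℝ) ^ ((n : ℝ) - (k : ℝ)) := Real.rpow_pos_of_pos (by norm_num) _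
    have hn0 : (0:ℝ) ≤ (n:ℝ) := Nat.cast_nonneg n
    have hk0 : (0:ℝ) ≤ (k:ℝ) := Nat.cast_nonneg k
    have hT0 : (0:ℝ) < T := by linarith
    -- bound the log
    have hlogk0 : 0 ≤ Real.log (3 + (k:ℝ)) := Real.log_nonneg (by linarith)
    have hlogk : Real.log (3 + (k:ℝ)) ≤ 2 + (k:ℝ) := by
      have := Real.log_le_sub_one_of_pos (show (0:ℝ) < 3 + (k:ℝ) by linarith)
      linarith
    have hX : Real.log (3 + |(n : ℝ) - (k : ℝ)| + (2 : ℝ) ^ ((n : ℝ) - (k : ℝ)) * T)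
        ≤ L * M * (3 + (k : ℝ)) ^ 2 := by
      have hXpos : (0:ℝ) < 3 + |(n : ℝ) - (k : ℝ)| + (2 : ℝ) ^ ((n : ℝ) - (k : ℝ)) * T := by
        have := abs_nonneg ((n:ℝ) - (k:ℝ)); nlinarith
      have step1 : 3 + |(n : ℝ) - (k : ℝ)| + (2 : ℝ) ^ ((n : ℝ) - (k : ℝ)) * T
          ≤ (3 + (n:ℝ) + (k:ℝ)) * (3 + (2:ℝ) ^ (n:ℝ) * T) := by
        nlinarith [mul_le_mul_of_nonneg_right h2j hT0.le,
          mul_nonneg (show (0:ℝ) ≤ (n:ℝ)+(k:ℝ) by linarith) (mul_pos h2n hT0).le,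
          (mul_pos h2n hT0)]
      have step2 : Real.log (3 + |(n : ℝ) - (k : ℝ)| + (2 : ℝ) ^ ((n : ℝ) - (k : ℝ)) * T)
          ≤ Real.log (3 + (n:ℝ) + (k:ℝ)) + L := by
        rw [hL_def, ← Real.log_mul (by linarith) (by nlinarith)]
        exact Real.log_le_log hXpos step1
      have step3 : Real.log (3 + (n:ℝ) + (k:ℝ)) ≤ M + Real.log (3 + (k:ℝ)) := by
        rw [hM_def, ← Real.log_mul (by linarith) (by linarith)]
        apply Real.log_le_log (by linarith)
        nlinarith
      have : Real.log (3 + |(n : ℝ) - (k : ℝ)| + (2 : ℝ) ^ ((n : ℝ) - (k : ℝ)) * T)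
          ≤ L + M + Real.log (3 + (k:ℝ)) := by linarith
      refine le_trans this ?_
      have hLM1 : 1 ≤ L * M := by nlinarith
      have h4 : L + M + Real.log (3 + (k:ℝ)) ≤ L * M * (4 + (k:ℝ)) := by
        nlinarith [mul_nonneg (show (0:ℝ) ≤ L - 1 by linarith) (show (0:ℝ) ≤ M - 1 by linarith),
          mul_nonneg (show (0:ℝ) ≤ L * M - 1 by linarith) (show (0:ℝ) ≤ 2 + (k:ℝ) by linarith)]
      refine le_trans h4 ?_
      apply mul_le_mul_of_nonneg_left (by nlinarith) (by linarith : (0:ℝ) ≤ L * M)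
    have hB : Real.sqrt (Real.log (3 + |(n : ℝ) - (k : ℝ)| + (2 : ℝ) ^ ((n : ℝ) - (k : ℝ)) * T))
        ≤ Real.sqrt (L * M) * (3 + (k:ℝ)) := by
      have := Real.sqrt_le_sqrt hX
      refine le_trans this ?_
      rw [Real.sqrt_mul (by nlinarith : (0:ℝ) ≤ L * M), Real.sqrt_sq (by linarith : (0:ℝ) ≤ 3 + (k:ℝ))]
    calc (2 : ℝ) ^ (((n : ℝ) - (k : ℝ)) * (1 - h)) *
          Real.sqrt (Real.log (3 + |(n : ℝ) - (k : ℝ)| + (2 : ℝ) ^ ((n : ℝ) - (k : ℝ)) * T))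
        ≤ (2 : ℝ) ^ (((n : ℝ) - (k : ℝ)) * (1 - h)) * (Real.sqrt (L * M) * (3 + (k:ℝ))) := by
          apply mul_le_mul_of_nonneg_left hB (Real.rpow_nonneg (by norm_num) _)
      _ = D * ((3 + (k : ℝ)) * r ^ k) := by rw [hA, hD_def]; ring
  have hsumD : Summable (fun k : ℕ => D * ((3 + (k : ℝ)) * r ^ k)) := hsum.mul_left D
  have hsumfe : Summable (f ∘ e) :=
    Summable.of_nonneg_of_le (fun k => hf_nonneg _) key hsumD
  have hsumf : Summable f := e.summable_iff.mp hsumfe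
  refine ⟨hsumf, ?_⟩
  calc (∑' j, f j) = ∑' k, f (e k) := (e.tsum_eq f).symm
    _ ≤ ∑' k : ℕ, D * ((3 + (k:ℝ)) * r ^ k) := Summable.tsum_le_tsum key hsumfe hsumD
    _ = D * C := by rw [hC_def, tsum_mul_left]
    _ = C * (2 : ℝ) ^ ((n : ℝ) * (1 - h)) * Real.sqrt (L * M) := by rw [hD_def]; ring
end
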